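/- arXiv:1501.06955 — 2 statements merged into one kernel-verified Lean document; each statement's English description precedes it below -/
import Mathlib

section
/- Let n ≥ 3 and μ ∈ ℂ. There exist constants N(μ) > 0 and M(μ) > 0, depending only on n and μ, such that for every x = (x₁,…,xₙ) ∈ ℂⁿ with H(x) = μ satisfying the sink condition |(∏_{j≠i} x_j) − xᵢ| ≥ |xᵢ| for every i ∈ {1,…,n}, one has min{|x₁|,…,|xₙ|} ≤ N(μ) and min_{1≤i<j≤n} |∏_{k≠i,j} x_k| ≤ M(μ). -/
open scoped BigOperators

/-- The Markoff–Hurwitz polynomial `H(x) = x₁² + ⋯ + xₙ² − x₁⋯xₙ`. -/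
noncomputable def MH (n : ℕ) (x : Fin n → ℂ) : ℂ := (∑ i, x i ^ 2) - ∏ i, x i

lemma abs_sub_le_abs_add_abs (A B : ℂ) :
    ‖A - B‖ ≤ ‖A‖ + ‖B‖ := by
  simpa using norm_sub_le A B

set_option maxHeartbeats 1000000 in
/-- **Sink estimate.** There are constants `N(μ), M(μ) > 0`, depending only on `n` and `μ`,
such that every `x` on the level set `H(x) = μ` which is a sink
(`|(∏_{j≠i} x_j) − xᵢ| ≥ |xᵢ|` for every `i`) satisfies `min |xᵢ| ≤ N(μ)` and
`min_{i<j} |∏_{k≠i,j} x_k| ≤ M(μ)`. -/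
theorem sink_estimate (n : ℕ) (hn : 3 ≤ n) (μ : ℂ) :
    ∃ N : ℝ, 0 < N ∧ ∃ M : ℝ, 0 < M ∧
      ∀ x : Fin n → ℂ, MH n x = μ →
        (∀ i : Fin n,
          ‖x i‖ ≤ ‖(∏ j ∈ Finset.univ.erase i, x j) - x i‖) →
        (∃ i : Fin n, ‖x i‖ ≤ N) ∧
        (∃ i j : Fin n, i < j ∧
          ‖∏ k ∈ (Finset.univ.erase i).erase j, x k‖ ≤ M) := by
  have hμ0 : 0 ≤ Norm.norm μ := norm_nonneg μ
  set D : ℝ := (n : ℝ) + Norm.norm μ with hDdef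
  have hD0 : 0 ≤ D := by positivity
  set r : ℝ := Real.sqrt D with hrdef
  have hr0 : 0 ≤ r := Real.sqrt_nonneg _
  have hr2 : r ^ 2 = D := Real.sq_sqrt hD0
  set K : ℝ := (n : ℝ) * r + Norm.norm μ + 1 with hKdef
  have hK1 : 1 ≤ K := by
    have : 0 ≤ (n : ℝ) * r := by positivity
    simp only [hKdef]; linarith
  have hK0 : 0 < K := by linarith
  refine ⟨K, hK0, K, hK0, ?_⟩
  intro x hH hsink
  simp only [MH] at hH
  set a : Fin n → ℝ := fun i => Norm.norm (x i) with hadef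
  have ha0 : ∀ i, 0 ≤ a i := fun i => norm_nonneg _
  have hne : (Finset.univ : Finset (Fin n)).Nonempty :=
    ⟨⟨0, by omega⟩, Finset.mem_univ _⟩
  obtain ⟨i₁, -, hmax1⟩ := Finset.exists_max_image Finset.univ a hne
  have hS1ne : (Finset.univ.erase i₁).Nonempty := by
    rw [← Finset.card_pos, Finset.card_erase_of_mem (Finset.mem_univ _),
      Finset.card_univ, Fintype.card_fin]
    omega
  obtain ⟨i₂, hi₂, hmax2⟩ := Finset.exists_max_image _ a hS1ne
  set S₂ : Finset (Fin n) := (Finset.univ.erase i₁).erase i₂ with hS₂def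
  have hS2ne : S₂.Nonempty := by
    rw [hS₂def, ← Finset.card_pos, Finset.card_erase_of_mem hi₂,
      Finset.card_erase_of_mem (Finset.mem_univ _), Finset.card_univ, Fintype.card_fin]
    omega
  obtain ⟨k₀, hk₀, hmin⟩ := Finset.exists_min_image S₂ a hS2ne
  -- basic abbreviations
  set s : ℝ := a i₁ with hsdef
  set t : ℝ := a i₂ with htdef
  set p : ℝ := ∏ k ∈ S₂, a k with hpdef
  have hp0 : 0 ≤ p := Finset.prod_nonneg (fun k _ => ha0 k)
  have hts : t ≤ s := hmax1 i₂ (Finset.mem_univ _)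
  -- the equation: ∏ x = ∑ x² - μ
  have hprod_eq : ∏ i, x i = (∑ i, x i ^ 2) - μ := by linear_combination -hH
  -- split of product
  have hsplit : (∏ i, x i) = x i₁ * (x i₂ * ∏ k ∈ S₂, x k) := by
    rw [Finset.mul_prod_erase _ x hi₂, Finset.mul_prod_erase Finset.univ x (Finset.mem_univ i₁)]
  have hprodabs : Norm.norm (∏ i, x i) = s * (t * p) := by
    rw [hsplit, norm_mul, norm_mul, norm_prod]
  -- bound on |∑ x²|
  have hsum_bound : Norm.norm (∑ i, x i ^ 2) ≤ (n : ℝ) * s ^ 2 := by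
    calc Norm.norm (∑ i, x i ^ 2) ≤ ∑ i, Norm.norm (x i ^ 2) :=
          norm_sum_le _ _
      _ = ∑ i, a i ^ 2 := by simp [map_pow, hadef]
      _ ≤ ∑ _i : Fin n, s ^ 2 := Finset.sum_le_sum (fun i _ =>
          pow_le_pow_left₀ (ha0 i) (hmax1 i (Finset.mem_univ i)) 2)
      _ = (n : ℝ) * s ^ 2 := by
          simp [Finset.sum_const, Finset.card_univ, nsmul_eq_mul]
  -- product modulus bound
  have hPx : s * (t * p) ≤ (n : ℝ) * s ^ 2 + Norm.norm μ := by
    rw [← hprodabs, hprod_eq]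
    calc Norm.norm ((∑ i, x i ^ 2) - μ)
        ≤ Norm.norm (∑ i, x i ^ 2) + Norm.norm μ := by
          exact abs_sub_le_abs_add_abs _ _
      _ ≤ (n : ℝ) * s ^ 2 + Norm.norm μ := by linarith
  -- sink bound at i₁ : s² ≤ n t² + |μ|
  have hkey : x i₁ * ((∏ j ∈ Finset.univ.erase i₁, x j) - x i₁)
      = (∑ j ∈ Finset.univ.erase i₁, x j ^ 2) - μ := by
    have h1 : x i₁ * ∏ j ∈ Finset.univ.erase i₁, x j = ∏ i, x i :=
      Finset.mul_prod_erase Finset.univ x (Finset.mem_univ i₁)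
    have h2 : x i₁ ^ 2 + ∑ j ∈ Finset.univ.erase i₁, x j ^ 2 = ∑ i, x i ^ 2 :=
      Finset.add_sum_erase Finset.univ (fun i => x i ^ 2) (Finset.mem_univ i₁)
    linear_combination h1 + hprod_eq - h2
  have hs2 : s ^ 2 ≤ (n : ℝ) * t ^ 2 + Norm.norm μ := by
    have h3 : s * s ≤ s * Norm.norm ((∏ j ∈ Finset.univ.erase i₁, x j) - x i₁) :=
      mul_le_mul_of_nonneg_left (hsink i₁) (ha0 i₁)
    have h4 : s * Norm.norm ((∏ j ∈ Finset.univ.erase i₁, x j) - x i₁)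
        = Norm.norm ((∑ j ∈ Finset.univ.erase i₁, x j ^ 2) - μ) := by
      rw [← norm_mul, hkey]
    have h5 : Norm.norm ((∑ j ∈ Finset.univ.erase i₁, x j ^ 2) - μ)
        ≤ (n : ℝ) * t ^ 2 + Norm.norm μ := by
      calc Norm.norm ((∑ j ∈ Finset.univ.erase i₁, x j ^ 2) - μ)
          ≤ Norm.norm (∑ j ∈ Finset.univ.erase i₁, x j ^ 2) + Norm.norm μ := by
            exact abs_sub_le_abs_add_abs _ _
        _ ≤ (∑ j ∈ Finset.univ.erase i₁, a j ^ 2) + Norm.norm μ := by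
            gcongr
            calc Norm.norm (∑ j ∈ Finset.univ.erase i₁, x j ^ 2)
                ≤ ∑ j ∈ Finset.univ.erase i₁, Norm.norm (x j ^ 2) :=
                  norm_sum_le _ _
              _ = ∑ j ∈ Finset.univ.erase i₁, a j ^ 2 := by simp [map_pow, hadef]
        _ ≤ (∑ _j ∈ Finset.univ.erase i₁, t ^ 2) + Norm.norm μ := by
            gcongr with j hj
            exact hmax2 j hj
        _ ≤ (n : ℝ) * t ^ 2 + Norm.norm μ := by
            rw [Finset.sum_const, nsmul_eq_mul]
            have hc : (((Finset.univ.erase i₁).card : ℕ) : ℝ) ≤ (n : ℝ) := by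
              rw [Finset.card_erase_of_mem (Finset.mem_univ _), Finset.card_univ,
                Fintype.card_fin]
              exact_mod_cast Nat.sub_le n 1
            have ht2 : (0 : ℝ) ≤ t ^ 2 := sq_nonneg t
            nlinarith [mul_le_mul_of_nonneg_right hc ht2]
    calc s ^ 2 = s * s := sq s
      _ ≤ _ := h3.trans (h4.le.trans h5)
  -- two key bounds: p ≤ K and a k₀ ≤ K
  have hcore : p ≤ K ∧ a k₀ ≤ K := by
    rcases le_or_gt t 1 with ht1 | ht1
    · -- small case
      have hp1 : p ≤ 1 := Finset.prod_le_one (fun k _ => ha0 k)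
        (fun k hk => (hmax2 k (Finset.mem_of_mem_erase hk)).trans ht1)
      have hk1 : a k₀ ≤ 1 := (hmax2 k₀ (Finset.mem_of_mem_erase hk₀)).trans ht1
      exact ⟨hp1.trans hK1, hk1.trans hK1⟩
    · -- large case
      have ht0 : 0 < t := by linarith
      have hs0 : 0 < s := lt_of_lt_of_le ht0 hts
      have h1t2 : (1 : ℝ) ≤ t ^ 2 := by nlinarith
      have hsrt : s ≤ r * t := by
        have h6 : s ^ 2 ≤ (r * t) ^ 2 := by
          rw [mul_pow, hr2]
          have hμt : Norm.norm μ ≤ Norm.norm μ * t ^ 2 := by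
            nlinarith [mul_le_mul_of_nonneg_left h1t2 hμ0]
          simp only [hDdef]; nlinarith
        nlinarith [sq_nonneg (s - r * t), sq_nonneg (s + r * t), mul_nonneg hr0 ht0.le]
      have hpK : p ≤ K := by
        have hst : 0 < s * t := mul_pos hs0 ht0
        have h7 : s * t * p ≤ (n : ℝ) * s ^ 2 + Norm.norm μ := by
          calc s * t * p = s * (t * p) := by ring
            _ ≤ _ := hPx
        have h8 : (n : ℝ) * s ^ 2 ≤ (n : ℝ) * r * (t * s) := by
          have hn0 : (0 : ℝ) ≤ (n : ℝ) := by positivity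
          nlinarith [mul_le_mul_of_nonneg_left
            (mul_le_mul_of_nonneg_right hsrt hs0.le) hn0]
        have h1st : (1 : ℝ) ≤ s * t := by nlinarith
        have h9 : Norm.norm μ ≤ Norm.norm μ * (s * t) := by
          nlinarith [mul_le_mul_of_nonneg_left h1st hμ0]
        have h10 : s * t * p ≤ ((n : ℝ) * r + Norm.norm μ) * (s * t) := by nlinarith
        have h11 : p ≤ (n : ℝ) * r + Norm.norm μ :=
          le_of_mul_le_mul_right (by nlinarith) hst
        linarith [hKdef.ge]
      refine ⟨hpK, ?_⟩
      rcases le_or_gt (a k₀) 1 with hk1 | hk1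
      · exact hk1.trans hK1
      · have hkp : a k₀ ≤ p := by
          have hsplit2 : p = a k₀ * ∏ k ∈ S₂.erase k₀, a k := by
            rw [hpdef, Finset.mul_prod_erase _ a hk₀]
          have h1le : (1 : ℝ) ≤ ∏ k ∈ S₂.erase k₀, a k := by
            have := Finset.prod_le_prod (s := S₂.erase k₀)
              (f := fun _ => (1 : ℝ)) (g := a)
              (fun k _ => zero_le_one)
              (fun k hk => le_trans hk1.le (hmin k (Finset.mem_of_mem_erase hk)))
            simpa using this
          calc a k₀ = a k₀ * 1 := (mul_one _).symm
            _ ≤ a k₀ * ∏ k ∈ S₂.erase k₀, a k := by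
                exact mul_le_mul_of_nonneg_left h1le (ha0 k₀)
            _ = p := hsplit2.symm
        exact hkp.trans hpK
  obtain ⟨hpK, hkK⟩ := hcore
  constructor
  · exact ⟨k₀, hkK⟩
  · have hne12 : i₂ ≠ i₁ := (Finset.mem_erase.mp hi₂).1
    refine ⟨min i₁ i₂, max i₁ i₂, min_lt_max.mpr (Ne.symm hne12), ?_⟩
    have hset : (Finset.univ.erase (min i₁ i₂)).erase (max i₁ i₂) = S₂ := by
      rcases le_total i₁ i₂ with h | h
      · rw [min_eq_left h, max_eq_right h]
      · rw [min_eq_right h, max_eq_left h, Finset.erase_right_comm]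
    rw [hset, norm_prod]
    exact hpK
end

section
/- Let n ≥ 3 and let f : 𝒜 → ℝ_{>0} be a function such that log⁺ ∘ f has a lower Fibonacci bound on 𝒜, i.e. there exist constants K > 0 and C > 0 such that log⁺ f(γ) ≥ K⁻¹·F(γ) − C for all γ ∈ 𝒜. Then for every t > 0 the infinite sum ∑_{γ∈𝒜} f(γ)^{−t} converges. -/
open scoped BigOperators

noncomputable section

namespace MarkoffHurwitz

/-- The Markoff–Hurwitz polynomial `H(x) = x₁² + ⋯ + xₙ² − x₁⋯xₙ`. -/
def MH (n : ℕ) (x : Fin n → ℂ) : ℂ := (∑ i, x i ^ 2) - ∏ i, x i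

/-- The involution `bᵢ` replacing `xᵢ` by `(∏_{j≠i} x_j) − xᵢ`. -/
def bmap (n : ℕ) (i : Fin n) (x : Fin n → ℂ) : Fin n → ℂ :=
  Function.update x i ((∏ j ∈ Finset.univ.erase i, x j) - x i)

lemma bmap_apply_ne (n : ℕ) (i : Fin n) (x : Fin n → ℂ) {j : Fin n} (h : j ≠ i) :
    bmap n i x j = x j := Function.update_of_ne h _ _

lemma bmap_apply_same (n : ℕ) (i : Fin n) (x : Fin n → ℂ) :
    bmap n i x i = (∏ j ∈ Finset.univ.erase i, x j) - x i := Function.update_self _ _ _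

lemma prod_erase_bmap (n : ℕ) (i : Fin n) (x : Fin n → ℂ) :
    ∏ j ∈ Finset.univ.erase i, bmap n i x j = ∏ j ∈ Finset.univ.erase i, x j :=
  Finset.prod_congr rfl fun j hj => bmap_apply_ne n i x (Finset.ne_of_mem_erase hj)

lemma bmap_involutive (n : ℕ) (i : Fin n) : Function.Involutive (bmap n i) := by
  intro x; funext j
  rcases eq_or_ne j i with rfl | h
  · rw [bmap_apply_same, prod_erase_bmap, bmap_apply_same]; ring
  · rw [bmap_apply_ne n i _ h, bmap_apply_ne n i x h]

/-- The relators `bᵢ²` of the Coxeter presentation. -/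
def MHrels (n : ℕ) : Set (FreeGroup (Fin n)) :=
  Set.range fun i : Fin n => FreeGroup.of i * FreeGroup.of i

/-- The group `Γₙ = ⟨b₁,…,bₙ ∣ bᵢ² = 1⟩`, free product of `n` copies of `ℤ/2`. -/
abbrev Gam (n : ℕ) := PresentedGroup (MHrels n)

/-- The generator `bᵢ` as an element of `Γₙ`. -/
def gen {n : ℕ} (i : Fin n) : Gam n := PresentedGroup.of i

lemma gen_mul_self {n : ℕ} (i : Fin n) : gen i * gen i = 1 := by
  have h : PresentedGroup.mk (MHrels n) (FreeGroup.of i * FreeGroup.of i) = 1 := by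
    have : (FreeGroup.of i * FreeGroup.of i) ∈ Subgroup.normalClosure (MHrels n) :=
      Subgroup.subset_normalClosure ⟨i, rfl⟩
    exact (QuotientGroup.eq_one_iff _).2 this
  simpa [gen, PresentedGroup.of, map_mul] using h

lemma gen_inv {n : ℕ} (i : Fin n) : (gen i)⁻¹ = gen i :=
  inv_eq_of_mul_eq_one_right (gen_mul_self i)

/-- `bᵢ` as a permutation of `ℂⁿ`. -/
def bperm (n : ℕ) (i : Fin n) : Equiv.Perm (Fin n → ℂ) := (bmap_involutive n i).toPerm

/-- The action of `Γₙ` on `ℂⁿ` by the involutions `bᵢ`. -/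
def act (n : ℕ) : Gam n →* Equiv.Perm (Fin n → ℂ) :=
  PresentedGroup.toGroup (f := fun i => bperm n i) (by
    rintro r ⟨i, rfl⟩
    rw [map_mul, FreeGroup.lift_apply_of]
    refine Equiv.ext fun x => ?_
    simpa [bperm, Equiv.Perm.mul_apply] using bmap_involutive n i x)

lemma act_gen (n : ℕ) (i : Fin n) : act n (gen i) = bperm n i :=
  PresentedGroup.toGroup.of _

/-- The subgroup `⟨bᵢ, b_j⟩` associated to an unordered pair `{i,j}`. -/
def pairSub {n : ℕ} : Sym2 (Fin n) → Subgroup (Gam n) :=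
  Sym2.lift ⟨fun i j => Subgroup.closure {gen i, gen j}, fun i j => by
    show Subgroup.closure {gen i, gen j} = Subgroup.closure {gen j, gen i}
    rw [Set.pair_comm]⟩

lemma pairSub_mk {n : ℕ} (i j : Fin n) :
    pairSub s(i, j) = Subgroup.closure {gen i, gen j} := rfl

/-- An alternating geodesic in the Cayley tree of `Γₙ`: an unordered pair `{i,j}`
of distinct colors together with a coset `g⟨bᵢ,b_j⟩`. -/
structure AltGeo (n : ℕ) where
  pair : Sym2 (Fin n)
  nd : ¬ pair.IsDiag
  coset : Gam n ⧸ pairSub pair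

/-- Coordinates outside of a pair `{i,j}`. -/
def offPair {n : ℕ} (s : Sym2 (Fin n)) : Finset (Fin n) :=
  Finset.univ.filter fun k => ¬ k ∈ s

/-- Key invariance: the coordinates off the pair do not change when moving along the coset. -/
lemma coords_eq {n : ℕ} (a : Fin n → ℂ) (s : Sym2 (Fin n)) {t : Gam n}
    (ht : t ∈ pairSub s) (g : Gam n) {k : Fin n} (hk : ¬ k ∈ s) :
    act n (g * t)⁻¹ a k = act n g⁻¹ a k := by
  induction s using Sym2.ind with
  | _ i j =>
    rw [pairSub_mk] at ht
    induction ht using Subgroup.closure_induction generalizing g with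
    | mem x hx =>
      have key : ∀ m : Fin n, m ∈ (s(i, j) : Sym2 (Fin n)) → ∀ g : Gam n,
          act n (g * gen m)⁻¹ a k = act n g⁻¹ a k := by
        intro m hm g
        rw [mul_inv_rev, gen_inv, map_mul, Equiv.Perm.mul_apply, act_gen]
        have hkm : k ≠ m := fun h => hk (h ▸ hm)
        exact bmap_apply_ne n m _ hkm
      rcases hx with rfl | rfl
      · exact key i (Sym2.mem_mk_left i j) g
      · exact key j (Sym2.mem_mk_right i j) g
    | one => rw [mul_one]
    | mul x y hx hy ihx ihy => rw [← mul_assoc]; rw [ihy, ihx]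
    | inv x hx ih =>
      have := ih (g := g * x⁻¹)
      rw [mul_assoc, inv_mul_cancel, mul_one] at this
      exact this.symm

/-- Representative version of the extended Hurwitz map. -/
def phiRep (n : ℕ) (a : Fin n → ℂ) (s : Sym2 (Fin n)) (g : Gam n) : ℂ :=
  ∏ k ∈ offPair s, act n g⁻¹ a k

/-- Representative version of the square sum weight. -/
def sigRep (n : ℕ) (a : Fin n → ℂ) (s : Sym2 (Fin n)) (g : Gam n) : ℂ :=
  ∑ k ∈ offPair s, (act n g⁻¹ a k) ^ 2

/-- The extended Hurwitz map `φ_a : 𝒜 → ℂ`, `φ(γ) = ∏_{k∉{i,j}} x_k`. -/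
def phiA (n : ℕ) (a : Fin n → ℂ) (γ : AltGeo n) : ℂ :=
  Quotient.liftOn' γ.coset (phiRep n a γ.pair) (by
    intro g h hgh
    have hmem : g⁻¹ * h ∈ pairSub γ.pair := QuotientGroup.leftRel_apply.mp hgh
    have : h = g * (g⁻¹ * h) := by group
    rw [this]
    unfold phiRep
    exact (Finset.prod_congr rfl fun k hk =>
      (coords_eq a γ.pair hmem g (Finset.mem_filter.mp hk).2)).symm)

/-- The square sum weight `σ_a : 𝒜 → ℂ`, `σ(γ) = ∑_{k∉{i,j}} x_k²`. -/
def sigA (n : ℕ) (a : Fin n → ℂ) (γ : AltGeo n) : ℂ :=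
  Quotient.liftOn' γ.coset (sigRep n a γ.pair) (by
    intro g h hgh
    have hmem : g⁻¹ * h ∈ pairSub γ.pair := QuotientGroup.leftRel_apply.mp hgh
    have : h = g * (g⁻¹ * h) := by group
    rw [this]
    unfold sigRep
    exact (Finset.sum_congr rfl fun k hk => by
      rw [coords_eq a γ.pair hmem g (Finset.mem_filter.mp hk).2]).symm)

/-- The set `𝒜_φ(K)` of alternating geodesics with `|φ(γ)| ≤ K`. -/
def AK (n : ℕ) (a : Fin n → ℂ) (K : ℝ) : Set (AltGeo n) :=
  {γ | ‖phiA n a γ‖ ≤ K}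

/-- The Bowditch domain `𝒟 ⊆ ℂⁿ`. -/
def BD (n : ℕ) : Set (Fin n → ℂ) :=
  {a | (∀ γ : AltGeo n, phiA n a γ ∉ (fun r : ℝ => (r : ℂ)) '' Set.Icc (-2 : ℝ) 2) ∧
    ∃ K : ℝ, 2 < K ∧ (AK n a K).Finite}



/-- Word length of `g ∈ Γₙ` with respect to the generators `b₁,…,bₙ`. -/
def glen (n : ℕ) (g : Gam n) : ℕ :=
  sInf {m | ∃ l : List (Fin n), l.length = m ∧ g = (l.map gen).prod}

/-- The alternating geodesic `[g;{i,k}]` through the vertex `g` with colors `{i,k}`. -/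
def mkGeo {n : ℕ} (i k : Fin n) (h : i ≠ k) (g : Gam n) : AltGeo n :=
  ⟨s(i, k), by rwa [Sym2.mk_isDiag_iff], QuotientGroup.mk g⟩

/-- `F : 𝒜 → ℕ` is the Fibonacci function relative to the root `v₀ = 1`:
`F(γ) = 1` if the root lies on `γ`, and otherwise `F(γ) = F([v*;{i,k}]) + F([v*;{j,k}])`,
where `v*` is the vertex of `γ` closest to the root and `k` is the label of the first
edge of the geodesic from `v*` to the root. -/
def IsFib (n : ℕ) (F : AltGeo n → ℕ) : Prop :=
  (∀ γ : AltGeo n, γ.coset = QuotientGroup.mk 1 → F γ = 1) ∧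
  (∀ γ : AltGeo n, γ.coset ≠ QuotientGroup.mk 1 →
    ∀ g : Gam n, QuotientGroup.mk g = γ.coset →
      (∀ h : Gam n, QuotientGroup.mk h = γ.coset → glen n g ≤ glen n h) →
      ∀ i j k : Fin n, γ.pair = s(i, j) → ∀ (hki : k ≠ i) (hkj : k ≠ j),
        glen n (g * gen k) < glen n g →
        F γ = F (mkGeo i k hki.symm g) + F (mkGeo j k hkj.symm g))

/-- `log⁺ t = max (0, log t)`. -/
def logp (t : ℝ) : ℝ := max 0 (Real.log t)

/-- The subgroup `⟨b_j : j ≠ i⟩`. -/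
def hatSub (n : ℕ) (i : Fin n) : Subgroup (Gam n) :=
  Subgroup.closure {g | ∃ j : Fin n, j ≠ i ∧ g = gen j}

lemma coord_eq (n : ℕ) (a : Fin n → ℂ) (i : Fin n) {t : Gam n}
    (ht : t ∈ hatSub n i) (g : Gam n) :
    act n (g * t)⁻¹ a i = act n g⁻¹ a i := by
  induction ht using Subgroup.closure_induction generalizing g with
  | mem x hx =>
    obtain ⟨j, hji, rfl⟩ := hx
    rw [mul_inv_rev, gen_inv, map_mul, Equiv.Perm.mul_apply, act_gen]
    exact bmap_apply_ne n j _ hji.symm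
  | one => rw [mul_one]
  | mul x y hx hy ihx ihy => rw [← mul_assoc, ihy, ihx]
  | inv x hx ih =>
    have := ih (g := g * x⁻¹)
    rw [mul_assoc, inv_mul_cancel, mul_one] at this
    exact this.symm

/-- For a coset `X = g⟨b_j : j ≠ i⟩ ∈ 𝒳ᵢ`, the (constant) `i`-th coordinate `φ(X)`. -/
def coordX (n : ℕ) (a : Fin n → ℂ) (i : Fin n) (X : Gam n ⧸ hatSub n i) : ℂ :=
  Quotient.liftOn' X (fun g => act n g⁻¹ a i) (by
    intro g h hgh
    have hmem : g⁻¹ * h ∈ hatSub n i := QuotientGroup.leftRel_apply.mp hgh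
    have hh : h = g * (g⁻¹ * h) := by group
    show act n g⁻¹ a i = act n h⁻¹ a i
    rw [hh, coord_eq n a i hmem g])

/-- `a ∈ ℂⁿ` is dihedral if some point of its `Γₙ`-orbit has two vanishing coordinates. -/
def Dihedral (n : ℕ) (a : Fin n → ℂ) : Prop :=
  ∃ (g : Gam n) (i j : Fin n), i ≠ j ∧ act n g a i = 0 ∧ act n g a j = 0

/-- The alternating geodesic `γ` contains the edge of color `i` incident to the vertex `g`. -/
def containsEdge {n : ℕ} (γ : AltGeo n) (g : Gam n) (i : Fin n) : Prop :=
  i ∈ γ.pair ∧ (QuotientGroup.mk g : Gam n ⧸ pairSub γ.pair) = γ.coset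

/-- Two alternating geodesics share an edge of the tree. -/
def ShareEdge {n : ℕ} (α β : AltGeo n) : Prop :=
  ∃ (g : Gam n) (i : Fin n), containsEdge α g i ∧ containsEdge β g i

/-- A set of alternating geodesics is edge-connected. -/
def EdgeConnected {n : ℕ} (P : Set (AltGeo n)) : Prop :=
  ∀ α ∈ P, ∀ β ∈ P, ∃ (m : ℕ) (c : ℕ → AltGeo n),
    c 0 = α ∧ c m = β ∧ (∀ t ≤ m, c t ∈ P) ∧ ∀ t < m, ShareEdge (c t) (c (t + 1))

/-- `h(z) = 1 − √(1 − 4/z²)`, with the principal square root (positive real part). -/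
def hfun (z : ℂ) : ℂ := 1 - (1 - 4 / z ^ 2) ^ ((1 : ℂ) / 2)

/-! ### Normal form for the free product of copies of ℤ/2 -/

/-- Reduced words: lists with no two adjacent equal letters. -/
abbrev RW (n : ℕ) := {l : List (Fin n) // l.IsChain (· ≠ ·)}

/-- The product of the word `l` in `Γₙ`. -/
def wprod {n : ℕ} (l : List (Fin n)) : Gam n := (l.map gen).prod

lemma wprod_nil {n : ℕ} : wprod ([] : List (Fin n)) = 1 := rfl

lemma wprod_cons {n : ℕ} (a : Fin n) (l : List (Fin n)) :
    wprod (a :: l) = gen a * wprod l := by simp [wprod]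

lemma wprod_append {n : ℕ} (l₁ l₂ : List (Fin n)) :
    wprod (l₁ ++ l₂) = wprod l₁ * wprod l₂ := by simp [wprod]

lemma wprod_reverse {n : ℕ} (l : List (Fin n)) :
    wprod l.reverse = (wprod l)⁻¹ := by
  induction l with
  | nil => simp [wprod]
  | cons a t ih =>
      rw [List.reverse_cons, wprod_append, ih,
        show wprod (a :: t) = gen a * wprod t from wprod_cons a t, mul_inv_rev, gen_inv]
      simp [wprod]

/-- The letter action on reduced words. -/
def sa {n : ℕ} (i : Fin n) : List (Fin n) → List (Fin n)
  | [] => [i]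
  | a :: t => if a = i then t else i :: a :: t

lemma sa_chain' {n : ℕ} (i : Fin n) {l : List (Fin n)} (h : l.IsChain (· ≠ ·)) :
    (sa i l).IsChain (· ≠ ·) := by
  cases l with
  | nil => simp [sa]
  | cons a t =>
      by_cases ha : a = i
      · simpa [sa, ha] using h.tail
      · have : (i : Fin n) ≠ a := fun hh => ha hh.symm
        simpa [sa, ha] using List.isChain_cons_cons.mpr ⟨this, h⟩

lemma sa_sa {n : ℕ} (i : Fin n) {l : List (Fin n)} (h : l.IsChain (· ≠ ·)) :
    sa i (sa i l) = l := by
  cases l with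
  | nil => simp [sa]
  | cons a t =>
      by_cases ha : a = i
      · subst ha
        cases t with
        | nil => simp [sa]
        | cons b t' =>
            have hb : ¬ b = a := fun hh => (List.isChain_cons_cons.mp h).1 hh.symm
            simp [sa, hb]
      · simp [sa, ha]

/-- The letter action as a permutation of reduced words. -/
def sact {n : ℕ} (i : Fin n) : RW n → RW n := fun l => ⟨sa i l.1, sa_chain' i l.2⟩

lemma sact_involutive {n : ℕ} (i : Fin n) : Function.Involutive (sact i) :=
  fun l => Subtype.ext (sa_sa i l.2)

/-- The action of `Γₙ` on reduced words. -/
def Phi {n : ℕ} : Gam n →* Equiv.Perm (RW n) :=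
  PresentedGroup.toGroup (f := fun i => (sact_involutive i).toPerm) (by
    rintro r ⟨i, rfl⟩
    rw [map_mul, FreeGroup.lift_apply_of]
    refine Equiv.ext fun x => ?_
    simpa [Equiv.Perm.mul_apply] using sact_involutive i x)

lemma Phi_gen {n : ℕ} (i : Fin n) (x : RW n) : Phi (gen i) x = sact i x := by
  have : Phi (gen i) = (sact_involutive i).toPerm := PresentedGroup.toGroup.of _
  rw [this]; rfl

/-- The normal form of `g`. -/
def rho {n : ℕ} (g : Gam n) : RW n := Phi g ⟨[], List.isChain_nil⟩

lemma exists_word {n : ℕ} (g : Gam n) : ∃ l : List (Fin n), g = wprod l := by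
  induction g using QuotientGroup.induction_on with
  | H z =>
    induction z using FreeGroup.induction_on with
    | C1 => exact ⟨[], rfl⟩
    | of i => exact ⟨[i], by simp [wprod]; rfl⟩
    | inv_of i _ =>
        refine ⟨[i], ?_⟩
        have h1 : (QuotientGroup.mk (FreeGroup.of i) : Gam n) = gen i := rfl
        show ((QuotientGroup.mk (FreeGroup.of i) : Gam n))⁻¹ = wprod [i]
        rw [h1]; exact (gen_inv i).trans (by simp [wprod])
    | mul x y hx hy =>
        obtain ⟨lx, hlx⟩ := hx
        obtain ⟨ly, hly⟩ := hy
        refine ⟨lx ++ ly, ?_⟩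
        have : (QuotientGroup.mk (x * y) : Gam n)
            = QuotientGroup.mk x * QuotientGroup.mk y := rfl
        rw [this, hlx, hly, wprod_append]
        rfl

lemma sa_wprod {n : ℕ} (i : Fin n) (l : List (Fin n)) :
    wprod (sa i l) = gen i * wprod l := by
  cases l with
  | nil => simp [sa, wprod]
  | cons a t =>
      by_cases ha : a = i
      · subst ha
        rw [sa, if_pos rfl, wprod_cons, ← mul_assoc, gen_mul_self, one_mul]
      · rw [sa, if_neg ha, wprod_cons]

lemma wprod_Phi {n : ℕ} (g : Gam n) (x : RW n) :
    wprod ((Phi g x).1) = g * wprod x.1 := by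
  obtain ⟨l, rfl⟩ := exists_word g
  induction l with
  | nil => rw [wprod_nil, map_one]; simp
  | cons a t ih =>
      rw [wprod_cons, map_mul, Equiv.Perm.mul_apply, Phi_gen]
      show wprod (sa a _) = _
      rw [sa_wprod, ih, mul_assoc]

lemma wprod_rho {n : ℕ} (g : Gam n) : wprod (rho g).1 = g := by
  have := wprod_Phi g ⟨[], List.isChain_nil⟩
  rw [wprod_nil, mul_one] at this
  exact this

lemma rho_wprod {n : ℕ} (l : List (Fin n)) (h : l.IsChain (· ≠ ·)) :
    rho (wprod l) = ⟨l, h⟩ := by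
  induction l with
  | nil => apply Subtype.ext; rw [wprod_nil]; show (Phi 1 _).1 = _; rw [map_one]; rfl
  | cons a t iht =>
      apply Subtype.ext
      have ht : t.IsChain (· ≠ ·) := h.tail
      have : rho (wprod (a :: t)) = Phi (gen a) (rho (wprod t)) := by
        rw [wprod_cons, rho, map_mul, Equiv.Perm.mul_apply]; rfl
      rw [this, iht ht, Phi_gen]
      show sa a t = a :: t
      cases t with
      | nil => rfl
      | cons b t' =>
          have hb : ¬ b = a := fun hh => (List.isChain_cons_cons.mp h).1 hh.symm
          simp [sa, hb]

lemma rho_len_le {n : ℕ} (l : List (Fin n)) :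
    (rho (wprod l)).1.length ≤ l.length := by
  induction l with
  | nil =>
      have : rho (wprod ([] : List (Fin n))) = ⟨[], List.isChain_nil⟩ :=
        rho_wprod [] List.isChain_nil
      simp [this]
  | cons a t ih =>
      have : rho (wprod (a :: t)) = sact a (rho (wprod t)) := by
        rw [wprod_cons, rho, map_mul, Equiv.Perm.mul_apply, Phi_gen]; rfl
      rw [this]
      have hsa : ∀ u : List (Fin n), (sa a u).length ≤ u.length + 1 := by
        intro u
        cases u with
        | nil => simp [sa]
        | cons b t' => by_cases hb : b = a <;> simp [sa, hb] <;> omega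
      calc (sa a (rho (wprod t)).1).length ≤ (rho (wprod t)).1.length + 1 := hsa _
        _ ≤ t.length + 1 := by omega

lemma glen_eq_rho {n : ℕ} (g : Gam n) : glen n g = (rho g).1.length := by
  have hmem : (rho g).1.length ∈
      {m | ∃ l : List (Fin n), l.length = m ∧ g = (l.map gen).prod} :=
    ⟨(rho g).1, rfl, (wprod_rho g).symm⟩
  refine le_antisymm (Nat.sInf_le hmem) ?_
  obtain ⟨l, hlen, hg⟩ := Nat.sInf_mem (⟨_, hmem⟩ : Set.Nonempty _)
  have : g = wprod l := hg
  calc (rho g).1.length = (rho (wprod l)).1.length := by rw [← this]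
    _ ≤ l.length := rho_len_le l
    _ = _ := hlen

lemma glen_wprod {n : ℕ} (l : List (Fin n)) (h : l.IsChain (· ≠ ·)) :
    glen n (wprod l) = l.length := by
  rw [glen_eq_rho, rho_wprod l h]
/-! ### The subgroup of a pair, and core (minimal) coset representatives -/

lemma gen_mem_pairSub {n : ℕ} {i j c : Fin n} (h : c = i ∨ c = j) :
    gen c ∈ pairSub s(i, j) := by
  rw [pairSub_mk]
  refine Subgroup.subset_closure ?_
  rcases h with rfl | rfl
  · exact Set.mem_insert _ _
  · exact Set.mem_insert_iff.mpr (Or.inr rfl)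

lemma wprod_mem_pairSub {n : ℕ} {i j : Fin n} {l : List (Fin n)}
    (h : ∀ c ∈ l, c = i ∨ c = j) : wprod l ∈ pairSub s(i, j) := by
  induction l with
  | nil => exact one_mem _
  | cons a t ih =>
      rw [wprod_cons]
      exact mul_mem (gen_mem_pairSub (h a (List.mem_cons_self)))
        (ih fun c hc => h c (List.mem_cons_of_mem a hc))

lemma mem_pairSub_exists {n : ℕ} {i j : Fin n} {t : Gam n} (ht : t ∈ pairSub s(i, j)) :
    ∃ l : List (Fin n), (∀ c ∈ l, c = i ∨ c = j) ∧ t = wprod l := by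
  rw [pairSub_mk] at ht
  induction ht using Subgroup.closure_induction with
  | mem x hx =>
      rcases hx with rfl | rfl
      · exact ⟨[i], by simp, by simp [wprod]⟩
      · exact ⟨[j], by simp, by simp [wprod]⟩
  | one => exact ⟨[], by simp, rfl⟩
  | mul x y hx hy ihx ihy =>
      obtain ⟨lx, hlx, rfl⟩ := ihx
      obtain ⟨ly, hly, rfl⟩ := ihy
      refine ⟨lx ++ ly, ?_, (wprod_append lx ly).symm⟩
      intro c hc
      rcases List.mem_append.mp hc with h | h
      · exact hlx c h
      · exact hly c h
  | inv x hx ih =>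
      obtain ⟨l, hl, rfl⟩ := ih
      exact ⟨l.reverse, fun c hc => hl c (List.mem_reverse.mp hc),
        (wprod_reverse l).symm⟩

lemma sa_letters {n : ℕ} (a : Fin n) (u : List (Fin n)) :
    ∀ c ∈ sa a u, c = a ∨ c ∈ u := by
  intro c hc
  cases u with
  | nil => simp [sa] at hc; exact Or.inl hc
  | cons b t =>
      by_cases hb : b = a
      · simp [sa, hb] at hc
        exact Or.inr (List.mem_cons_of_mem b hc)
      · simp [sa, hb] at hc
        rcases hc with rfl | hc
        · exact Or.inl rfl
        · exact Or.inr (by simpa using hc)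

lemma rho_letters_aux {n : ℕ} {i j : Fin n} (l : List (Fin n))
    (hl : ∀ c ∈ l, c = i ∨ c = j) :
    ∀ c ∈ (rho (wprod l)).1, c = i ∨ c = j := by
  induction l with
  | nil =>
      have : rho (wprod ([] : List (Fin n))) = ⟨[], List.isChain_nil⟩ :=
        rho_wprod [] List.isChain_nil
      rw [this]; intro c hc; exact absurd hc (List.not_mem_nil)
  | cons a u ih =>
      have hstep : rho (wprod (a :: u)) = sact a (rho (wprod u)) := by
        rw [wprod_cons, rho, map_mul, Equiv.Perm.mul_apply, Phi_gen]; rfl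
      rw [hstep]
      intro c hc
      rcases sa_letters a (rho (wprod u)).1 c hc with rfl | hc'
      · exact hl c (List.mem_cons_self)
      · exact ih (fun d hd => hl d (List.mem_cons_of_mem a hd)) c hc'

lemma rho_letters_pairSub {n : ℕ} {i j : Fin n} {t : Gam n} (ht : t ∈ pairSub s(i, j)) :
    ∀ c ∈ (rho t).1, c = i ∨ c = j := by
  obtain ⟨l, hl, rfl⟩ := mem_pairSub_exists ht
  exact rho_letters_aux l hl

/-- A core word for the pair `{i,j}`: reduced and not ending with `i` or `j`. -/
def Core {n : ℕ} (i j : Fin n) (u : List (Fin n)) : Prop :=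
  u.IsChain (· ≠ ·) ∧ ∀ c, u.getLast? = some c → c ≠ i ∧ c ≠ j

lemma chain'_ne_reverse {n : ℕ} {l : List (Fin n)} (h : l.IsChain (· ≠ ·)) :
    l.reverse.IsChain (· ≠ ·) := by
  rw [List.isChain_reverse]
  exact h.imp fun a b hab => fun hh => hab hh.symm

lemma core_append_chain' {n : ℕ} {i j : Fin n} {u v : List (Fin n)}
    (hu : Core i j u) (hv : v.IsChain (· ≠ ·)) (hvl : ∀ c ∈ v, c = i ∨ c = j) :
    (u ++ v).IsChain (· ≠ ·) := by
  apply List.IsChain.append hu.1 hv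
  intro x hx y hy
  have hxij := hu.2 x hx
  have := hvl y (List.mem_of_mem_head? hy)
  rcases this with rfl | rfl
  · exact fun hh => hxij.1 hh
  · exact fun hh => hxij.2 hh

lemma rho_wprod_mul {n : ℕ} {i j : Fin n} {u : List (Fin n)} (hu : Core i j u)
    {t : Gam n} (ht : t ∈ pairSub s(i, j)) :
    (rho (wprod u * t)).1 = u ++ (rho t).1 := by
  have hch : (u ++ (rho t).1).IsChain (· ≠ ·) :=
    core_append_chain' hu (rho t).2 (rho_letters_pairSub ht)
  have : wprod u * t = wprod (u ++ (rho t).1) := by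
    rw [wprod_append, wprod_rho]
  rw [this, rho_wprod _ hch]

lemma core_min {n : ℕ} {i j : Fin n} {u : List (Fin n)} (hu : Core i j u)
    {t : Gam n} (ht : t ∈ pairSub s(i, j)) :
    glen n (wprod u) ≤ glen n (wprod u * t) := by
  rw [glen_wprod u hu.1, glen_eq_rho, rho_wprod_mul hu ht, List.length_append]
  omega

lemma core_unique {n : ℕ} {i j : Fin n} {u v : List (Fin n)} (hu : Core i j u)
    (hv : Core i j v) (h : (wprod u)⁻¹ * wprod v ∈ pairSub s(i, j)) : u = v := by
  set t₁ := (wprod u)⁻¹ * wprod v with ht1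
  have h' : (wprod v)⁻¹ * wprod u ∈ pairSub s(i, j) := by
    have := inv_mem h; rwa [ht1, mul_inv_rev, inv_inv] at this
  set t₂ := (wprod v)⁻¹ * wprod u with ht2
  have h1 : wprod v = wprod u * t₁ := by rw [ht1]; group
  have h2 : wprod u = wprod v * t₂ := by rw [ht2]; group
  have e1 : v = u ++ (rho t₁).1 :=
    calc v = (rho (wprod v)).1 := by rw [rho_wprod v hv.1]
      _ = (rho (wprod u * t₁)).1 := by rw [← h1]
      _ = u ++ (rho t₁).1 := rho_wprod_mul hu h
  have e2 : u = v ++ (rho t₂).1 :=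
    calc u = (rho (wprod u)).1 := by rw [rho_wprod u hu.1]
      _ = (rho (wprod v * t₂)).1 := by rw [← h2]
      _ = v ++ (rho t₂).1 := rho_wprod_mul hv h'
  have hlen : v.length = u.length + (rho t₁).1.length := by
    rw [e1, List.length_append]
  have hlen2 : u.length = v.length + (rho t₂).1.length := by
    rw [e2, List.length_append]
  have hz : (rho t₁).1.length = 0 := by omega
  rw [e1, List.length_eq_zero_iff.mp hz, List.append_nil]

/-- The predicate for deciding pair letters. -/
def pb {n : ℕ} (i j c : Fin n) : Bool := c = i ∨ c = j

/-- Strip the maximal `{i,j}`-suffix from a word. -/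
def coreAux {n : ℕ} (i j : Fin n) (l : List (Fin n)) : List (Fin n) :=
  (l.reverse.dropWhile (pb i j)).reverse

lemma chain'_dropWhile {n : ℕ} (p : Fin n → Bool) {l : List (Fin n)}
    (h : l.IsChain (· ≠ ·)) : (l.dropWhile p).IsChain (· ≠ ·) := by
  induction l with
  | nil => simp
  | cons a t ih =>
      by_cases ha : p a
      · rw [List.dropWhile_cons_of_pos ha]; exact ih h.tail
      · rw [List.dropWhile_cons_of_neg ha]; exact h

lemma coreAux_core {n : ℕ} (i j : Fin n) {l : List (Fin n)}
    (h : l.IsChain (· ≠ ·)) : Core i j (coreAux i j l) := by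
  constructor
  · exact chain'_ne_reverse (chain'_dropWhile _ (chain'_ne_reverse h))
  · intro c hc
    rw [coreAux, List.getLast?_reverse] at hc
    have := List.head?_dropWhile_not (pb i j) l.reverse
    rw [hc] at this
    have hpb : pb i j c = false := this
    constructor
    · intro hh; rw [pb, hh] at hpb; simp at hpb
    · intro hh; rw [pb, hh] at hpb; simp at hpb

lemma coreAux_decomp {n : ℕ} (i j : Fin n) (l : List (Fin n)) :
    l = coreAux i j l ++ (l.reverse.takeWhile (pb i j)).reverse := by
  conv_lhs => rw [← List.reverse_reverse l,
    ← List.takeWhile_append_dropWhile (p := pb i j) (l := l.reverse)]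
  rw [List.reverse_append, coreAux]

lemma coreAux_coset {n : ℕ} (i j : Fin n) (l : List (Fin n)) :
    (wprod (coreAux i j l))⁻¹ * wprod l ∈ pairSub s(i, j) := by
  have hw : wprod l
      = wprod (coreAux i j l) * wprod ((l.reverse.takeWhile (pb i j)).reverse) := by
    conv_lhs => rw [coreAux_decomp i j l]
    rw [wprod_append]
  rw [hw, inv_mul_cancel_left]
  apply wprod_mem_pairSub
  intro c hc
  have h1 : c ∈ l.reverse.takeWhile (pb i j) := List.mem_reverse.mp hc
  have h2 := List.mem_takeWhile_imp h1
  rw [pb] at h2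
  simpa using h2

/-! ### The Fibonacci recursion in combinatorial form -/

lemma wprod_concat {n : ℕ} (u : List (Fin n)) (l : Fin n) :
    wprod (u ++ [l]) = wprod u * gen l := by
  rw [wprod_append]; simp [wprod]

lemma mkGeo_coset_eq {n : ℕ} {i j : Fin n} (h : i ≠ j) {g₁ g₂ : Gam n}
    (hc : g₁⁻¹ * g₂ ∈ pairSub s(i, j)) : mkGeo i j h g₁ = mkGeo i j h g₂ := by
  unfold mkGeo
  have : (QuotientGroup.mk g₁ : Gam n ⧸ pairSub s(i, j)) = QuotientGroup.mk g₂ :=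
    QuotientGroup.eq.mpr hc
  rw [this]

lemma AltGeo_mk_congr {n : ℕ} {p q : Sym2 (Fin n)} (hpq : p = q)
    {ndp : ¬ p.IsDiag} {ndq : ¬ q.IsDiag} (g : Gam n) :
    (⟨p, ndp, QuotientGroup.mk g⟩ : AltGeo n) = ⟨q, ndq, QuotientGroup.mk g⟩ := by
  subst hpq; rfl

lemma mkGeo_swap {n : ℕ} (i j : Fin n) (h : i ≠ j) (g : Gam n) :
    mkGeo i j h g = mkGeo j i h.symm g :=
  AltGeo_mk_congr (Sym2.eq_swap) g

section FF
variable {n : ℕ} (F : AltGeo n → ℕ)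

/-- `F` evaluated on the `{i,j}`-geodesic through the vertex `wprod u`. -/
def Fc (i j : Fin n) (u : List (Fin n)) : ℕ :=
  if h : i ≠ j then F (mkGeo i j h (wprod u)) else 0

lemma Fc_def {i j : Fin n} (h : i ≠ j) (u : List (Fin n)) :
    Fc F i j u = F (mkGeo i j h (wprod u)) := by
  rw [Fc, dif_pos h]

lemma Fc_symm (i j : Fin n) (u : List (Fin n)) : Fc F i j u = Fc F j i u := by
  by_cases h : i ≠ j
  · rw [Fc_def F h, Fc_def F (Ne.symm h), mkGeo_swap]
  · have h' : ¬ (j ≠ i) := fun hh => h hh.symm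
    rw [Fc, dif_neg h, Fc, dif_neg h']

lemma Fc_concat_mem {i j : Fin n} (h : i ≠ j) {l : Fin n} (hl : l = i ∨ l = j)
    (u : List (Fin n)) : Fc F i j (u ++ [l]) = Fc F i j u := by
  rw [Fc_def F h, Fc_def F h]
  congr 1
  apply mkGeo_coset_eq h
  rw [wprod_concat, mul_inv_rev, mul_assoc, inv_mul_cancel, mul_one]
  exact inv_mem (gen_mem_pairSub hl)

variable (hF : IsFib n F)
include hF

lemma Fc_root {i j : Fin n} (h : i ≠ j) {u : List (Fin n)}
    (hu : wprod u ∈ pairSub s(i, j)) : Fc F i j u = 1 := by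
  rw [Fc_def F h]
  apply hF.1
  show (QuotientGroup.mk (wprod u) : Gam n ⧸ pairSub s(i, j)) = QuotientGroup.mk 1
  exact QuotientGroup.eq.mpr (by simpa using inv_mem hu)

lemma Fc_rec {i j : Fin n} (hij : i ≠ j) {u : List (Fin n)}
    (hu : Core i j u) {k : Fin n} (hk : u.getLast? = some k) :
    Fc F i j u = Fc F i k u + Fc F j k u := by
  have hki : k ≠ i := (hu.2 k hk).1
  have hkj : k ≠ j := (hu.2 k hk).2
  have hkmem : k ∈ u := List.mem_of_mem_getLast? hk
  have hune : u ≠ [] := by rintro rfl; cases hkmem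
  -- the geodesic
  have hne : (mkGeo i j hij (wprod u)).coset ≠ QuotientGroup.mk 1 := by
    intro hh
    have h1 : (wprod u)⁻¹ * 1 ∈ pairSub s(i, j) := QuotientGroup.eq.mp hh
    rw [mul_one] at h1
    have hmem : wprod u ∈ pairSub s(i, j) := by simpa using inv_mem h1
    have hlet := rho_letters_pairSub hmem k
      (by rw [rho_wprod u hu.1]; exact hkmem)
    rcases hlet with rfl | rfl
    · exact hki rfl
    · exact hkj rfl
  have hmin : ∀ h : Gam n, QuotientGroup.mk h = (mkGeo i j hij (wprod u)).coset →
      glen n (wprod u) ≤ glen n h := by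
    intro h hh
    have hmem : (wprod u)⁻¹ * h ∈ pairSub s(i, j) := by
      have : (QuotientGroup.mk (wprod u) : Gam n ⧸ pairSub s(i, j))
          = QuotientGroup.mk h := hh.symm
      exact QuotientGroup.eq.mp this
    have hrepr : h = wprod u * ((wprod u)⁻¹ * h) := by group
    rw [hrepr]
    exact core_min hu hmem
  have hdec : u.dropLast ++ [k] = u := List.dropLast_append_getLast? k hk
  have hdl : u.dropLast.IsChain (· ≠ ·) := by
    have := hu.1
    rw [← hdec] at this
    exact (List.isChain_append.mp this).1
  have hdesc : glen n (wprod u * gen k) < glen n (wprod u) := by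
    have h1 : wprod u * gen k = wprod u.dropLast := by
      conv_lhs => rw [← hdec]
      rw [wprod_concat, mul_assoc, gen_mul_self, mul_one]
    rw [h1, glen_wprod _ hdl, glen_wprod _ hu.1]
    have : u.dropLast.length = u.length - 1 := List.length_dropLast
    have hpos : 0 < u.length := List.length_pos_iff.mpr hune
    omega
  have := hF.2 (mkGeo i j hij (wprod u)) hne (wprod u) rfl hmin i j k rfl hki hkj hdesc
  rw [Fc_def F hij, Fc_def F (Ne.symm hki), Fc_def F (Ne.symm hkj)]
  exact this

end FF

/-- The combinatorial Fibonacci values along reversed core words. -/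
def Gr {n : ℕ} : List (Fin n) → Fin n → ℕ
  | [], _ => 0
  | [_], _ => 1
  | l :: k :: r, c => if c = k then Gr (k :: r) l else Gr (k :: r) c + Gr (k :: r) l

section FF2
variable {n : ℕ} (F : AltGeo n → ℕ) (hF : IsFib n F)
include hF

lemma Fc_eq_Gr : ∀ (r : List (Fin n)), r.IsChain (· ≠ ·) →
    ∀ (k : Fin n) (r' : List (Fin n)), r = k :: r' →
    ∀ c, c ≠ k → Fc F c k r.reverse = Gr r c := by
  intro r
  induction r with
  | nil => intro _ k r' h; cases h
  | cons a t ih =>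
      intro hch k r' heq c hc
      cases heq
      cases t with
      | nil =>
          have h0 : ([a] : List (Fin n)).reverse = [] ++ [a] := by simp
          rw [h0, Fc_concat_mem F hc (Or.inr rfl),
            Fc_root F hF hc (by rw [wprod_nil]; exact one_mem _)]
          rfl
      | cons b t' =>
          have hkb : a ≠ b := (List.isChain_cons_cons.mp hch).1
          have hchb : (b :: t').IsChain (· ≠ ·) := (List.isChain_cons_cons.mp hch).2
          have ihb := ih hchb b t' rfl
          have hrev : (a :: b :: t').reverse = (b :: t').reverse ++ [a] := by simp
          by_cases hcb : c = b
          · subst hcb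
            rw [hrev, Fc_concat_mem F hc (Or.inr rfl)]
            have h1 : Fc F c a (c :: t').reverse = Fc F a c (c :: t').reverse :=
              Fc_symm F c a _
            have h2 := ihb a hkb
            rw [h1, h2]
            show Gr (c :: t') a = Gr (a :: c :: t') c
            simp [Gr]
          · rw [hrev, Fc_concat_mem F hc (Or.inr rfl)]
            have hwch : ((b :: t').reverse).IsChain (· ≠ ·) := chain'_ne_reverse hchb
            have hwlast : ((b :: t').reverse).getLast? = some b := by
              rw [List.getLast?_reverse]; rfl
            have hcore : Core c a ((b :: t').reverse) := by
              refine ⟨hwch, ?_⟩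
              intro d hd
              rw [hwlast] at hd
              injection hd with hd; subst hd
              exact ⟨fun hh => hcb hh.symm, fun hh => hkb hh.symm⟩
            have hrec := Fc_rec F hF hc hcore hwlast
            rw [hrec, ihb c hcb, ihb a hkb]
            show Gr (b :: t') c + Gr (b :: t') a = Gr (a :: b :: t') c
            simp [Gr, hcb]
end FF2
/-! ### Growth invariants for `Gr` -/

lemma Gr_pos {n : ℕ} : ∀ (r : List (Fin n)), r ≠ [] → ∀ c, 1 ≤ Gr r c := by
  intro r
  induction r with
  | nil => intro h; exact absurd rfl h
  | cons a t ih =>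
      intro _ c
      cases t with
      | nil => exact le_refl 1
      | cons b t' =>
          show 1 ≤ if c = b then Gr (b :: t') a else Gr (b :: t') c + Gr (b :: t') a
          split
          · exact ih (by simp) a
          · have h1 := ih (by simp) c
            have h2 := ih (by simp) a
            omega

lemma Gr_min_slot {n : ℕ} (k p : Fin n) (r'' : List (Fin n)) {c : Fin n} (hcp : c ≠ p) :
    Gr (k :: p :: r'') p + 1 ≤ Gr (k :: p :: r'') c := by
  have h1 : Gr (k :: p :: r'') p = Gr (p :: r'') k := if_pos rfl
  have h2 : Gr (k :: p :: r'') c = Gr (p :: r'') c + Gr (p :: r'') k := if_neg hcp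
  have h3 := Gr_pos (p :: r'') (by simp) c
  omega

/-- The deviation list of a (reversed) word. -/
def devr {n : ℕ} : List (Fin n) → List (ℕ × Fin n)
  | [] => []
  | [_] => []
  | [_, _] => []
  | a :: b :: p :: r' =>
      if a = p then devr (b :: p :: r')
      else (r'.length + 2, a) :: devr (b :: p :: r')

lemma devr_pos_lt {n : ℕ} : ∀ (r : List (Fin n)) (e : ℕ × Fin n), e ∈ devr r → e.1 < r.length := by
  intro r
  induction r with
  | nil => intro e he; cases he
  | cons a t ih =>
      intro e he
      match t, he with
      | [], he => cases he
      | [b], he => cases he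
      | b :: p :: r', he =>
          by_cases hap : a = p
          · rw [show devr (a :: b :: p :: r') = devr (b :: p :: r') from if_pos hap] at he
            have := ih e he
            simp only [List.length_cons] at *
            omega
          · rw [show devr (a :: b :: p :: r')
                = (r'.length + 2, a) :: devr (b :: p :: r') from if_neg hap] at he
            rcases List.mem_cons.mp he with rfl | he'
            · simp only [List.length_cons]; omega
            · have := ih e he'
              simp only [List.length_cons] at *
              omega

lemma fib_two_mul_le {d : ℕ} : Nat.fib (d + 2) ≤ 2 * Nat.fib (d + 1) := by
  rw [Nat.fib_add_two]
  have := Nat.fib_le_fib_succ (n := d)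
  omega

lemma Gr_inv {n : ℕ} : ∀ (r : List (Fin n)), r.IsChain (· ≠ ·) →
    ∀ (k : Fin n) (r' : List (Fin n)), r = k :: r' →
    (∀ c, c ≠ k → Nat.fib ((devr r).length + 1) ≤ Gr r c) ∧
    (∀ c c', c ≠ k → c' ≠ k → c ≠ c' →
      Nat.fib ((devr r).length + 2) ≤ Gr r c ∨ Nat.fib ((devr r).length + 2) ≤ Gr r c') ∧
    (∀ c c', c ≠ k → c' ≠ k → c ≠ c' → r.length + 1 ≤ Gr r c + Gr r c') := by
  intro r
  induction r with
  | nil => intro _ k r' h; cases h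
  | cons a t ih =>
      intro hch k r' heq; cases heq
      cases t with
      | nil =>
          have hdev : devr [a] = ([] : List (ℕ × Fin n)) := rfl
          have hGr : ∀ c, Gr [a] c = 1 := fun _ => rfl
          refine ⟨fun c hc => ?_, fun c c' hc hc' hcc => ?_, fun c c' hc hc' hcc => ?_⟩
          · rw [hdev, hGr]; simp
          · left; rw [hdev, hGr]; simp [Nat.fib]
          · rw [hGr, hGr]; simp
      | cons b t2 =>
        have hab : a ≠ b := (List.isChain_cons_cons.mp hch).1
        have hcht : (b :: t2).IsChain (· ≠ ·) := (List.isChain_cons_cons.mp hch).2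
        cases t2 with
        | nil =>
            have hdev : devr [a, b] = ([] : List (ℕ × Fin n)) := rfl
            have hval : ∀ c, Gr [a, b] c = if c = b then 1 else 2 := fun c => by
              show (if c = b then Gr [b] a else Gr [b] c + Gr [b] a) = _
              split <;> rfl
            refine ⟨fun c hc => ?_, fun c c' hc hc' hcc => ?_, fun c c' hc hc' hcc => ?_⟩
            · rw [hdev, hval]; split <;> simp
            · left; rw [hdev, hval]; split <;> simp [Nat.fib]
            · rw [hval, hval]
              by_cases hcb : c = b
              · rw [if_pos hcb, if_neg (fun hh => hcc (hcb.trans hh.symm))]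
                simp
              · rw [if_neg hcb]
                split <;> simp
        | cons p r'' =>
            have hbp : b ≠ p := (List.isChain_cons_cons.mp hcht).1
            obtain ⟨At, Bt, Ct⟩ := ih hcht b (p :: r'') rfl
            have hpos : ∀ c, 1 ≤ Gr (b :: p :: r'') c := Gr_pos _ (by simp)
            have hGrr : ∀ c, Gr (a :: b :: p :: r'') c
                = if c = b then Gr (b :: p :: r'') a
                  else Gr (b :: p :: r'') c + Gr (b :: p :: r'') a := fun _ => rfl
            -- the length invariant (shared by both cases)
            have hC : ∀ c c', c ≠ a → c' ≠ a → c ≠ c' →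
                (a :: b :: p :: r'').length + 1
                  ≤ Gr (a :: b :: p :: r'') c + Gr (a :: b :: p :: r'') c' := by
              intro c c' hc hc' hcc
              rw [hGrr c, hGrr c']
              have hpa := hpos a
              simp only [List.length_cons] at Ct ⊢
              by_cases hcb : c = b
              · rw [if_pos hcb, if_neg (fun hh => hcc (hcb.trans hh.symm))]
                have := Ct a c' hab (fun hh => hcc (hcb.trans hh.symm))
                  (fun hh => hc' hh.symm)
                omega
              · rw [if_neg hcb]
                by_cases hcb' : c' = b
                · rw [if_pos hcb']
                  have := Ct a c hab hcb (fun hh => hc hh.symm)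
                  omega
                · rw [if_neg hcb']
                  have := Ct c c' hcb hcb' hcc
                  omega
            by_cases hap : a = p
            · -- non-deviating step
              have hdev : devr (a :: b :: p :: r'') = devr (b :: p :: r'') := if_pos hap
              refine ⟨fun c hc => ?_, fun c c' hc hc' hcc => ?_, hC⟩
              · rw [hdev, hGrr c]
                by_cases hcb : c = b
                · rw [if_pos hcb]; exact At a hab
                · rw [if_neg hcb]
                  have h1 := At a hab
                  omega
              · rw [hdev]
                have key : ∀ c₀, c₀ ≠ a → c₀ ≠ b →
                    Nat.fib ((devr (b :: p :: r'')).length + 2)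
                      ≤ Gr (a :: b :: p :: r'') c₀ := by
                  intro c₀ hc₀a hc₀b
                  rw [hGrr c₀, if_neg hc₀b]
                  have h1 := At c₀ hc₀b
                  have h2 := At a hab
                  have h3 := fib_two_mul_le (d := (devr (b :: p :: r'')).length)
                  omega
                by_cases hcb : c = b
                · right; exact key c' hc' (fun hh => hcc (hcb.trans hh.symm))
                · left; exact key c hc hcb
            · -- deviating step
              have hdev : devr (a :: b :: p :: r'')
                  = (r''.length + 2, a) :: devr (b :: p :: r'') := if_neg hap
              have hkey : Nat.fib ((devr (b :: p :: r'')).length + 2)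
                  ≤ Gr (b :: p :: r'') a := by
                rcases Bt a p hab (Ne.symm hbp) hap with h | h
                · exact h
                · have := Gr_min_slot b p r'' hap
                  omega
              refine ⟨fun c hc => ?_, fun c c' hc hc' hcc => ?_, hC⟩
              · rw [hdev, hGrr c]
                simp only [List.length_cons]
                rw [show (devr (b :: p :: r'')).length + 1 + 1
                  = (devr (b :: p :: r'')).length + 2 by omega]
                by_cases hcb : c = b
                · rw [if_pos hcb]; exact hkey
                · rw [if_neg hcb]
                  have := hpos c
                  omega
              · rw [hdev]
                simp only [List.length_cons]
                have key : ∀ c₀, c₀ ≠ a → c₀ ≠ b →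
                    Nat.fib ((devr (b :: p :: r'')).length + 1 + 2)
                      ≤ Gr (a :: b :: p :: r'') c₀ := by
                  intro c₀ hc₀a hc₀b
                  rw [hGrr c₀, if_neg hc₀b]
                  have h1 := At c₀ hc₀b
                  have h2 : Nat.fib ((devr (b :: p :: r'')).length + 1 + 2)
                      = Nat.fib ((devr (b :: p :: r'')).length + 1)
                        + Nat.fib ((devr (b :: p :: r'')).length + 2) := by
                    rw [Nat.fib_add_two, show (devr (b :: p :: r'')).length + 1 + 1
                      = (devr (b :: p :: r'')).length + 2 by omega]
                  omega
                by_cases hcb : c = b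
                · right; exact key c' hc' (fun hh => hcc (hcb.trans hh.symm))
                · left; exact key c hc hcb
/-! ### Reconstruction: a word is determined by its length, seeds and deviations -/

lemma getLast?_cons_ne {α : Type*} (a : α) {l : List α} (h : l ≠ []) :
    (a :: l).getLast? = l.getLast? := by
  cases l with
  | nil => exact absurd rfl h
  | cons b t => exact List.getLast?_cons_cons

lemma dropLast_getLast?_cons {α : Type*} (a : α) {l : List α} (h : 2 ≤ l.length) :
    ((a :: l).dropLast).getLast? = l.dropLast.getLast? := by
  match l, h with
  | b :: c :: t, _ =>
      rw [List.dropLast_cons₂]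
      apply getLast?_cons_ne
      rw [List.dropLast_cons₂]
      simp

lemma encode_inj {n : ℕ} : ∀ (N : ℕ) (r₁ r₂ : List (Fin n)), r₁.length ≤ N →
    r₁.length = r₂.length → r₁.getLast? = r₂.getLast? →
    r₁.dropLast.getLast? = r₂.dropLast.getLast? → devr r₁ = devr r₂ → r₁ = r₂ := by
  intro N
  induction N with
  | zero =>
      intro r₁ r₂ hle hlen _ _ _
      have h1 : r₁ = [] := List.length_eq_zero_iff.mp (Nat.le_zero.mp hle)
      subst h1
      exact (List.length_eq_zero_iff.mp hlen.symm).symm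
  | succ N ihN =>
      intro r₁ r₂ hle hlen hlast hdl hdev
      cases r₁ with
      | nil =>
          cases r₂ with
          | nil => rfl
          | cons a₂ s₂ => simp at hlen
      | cons a₁ s₁ =>
        cases r₂ with
        | nil => simp at hlen
        | cons a₂ s₂ =>
          cases s₁ with
          | nil =>
              cases s₂ with
              | nil => simp at hlast; rw [hlast]
              | cons b₂ s₂' => simp at hlen
          | cons b₁ s₁' =>
            cases s₂ with
            | nil => simp at hlen
            | cons b₂ s₂' =>
              cases s₁' with
              | nil =>
                  cases s₂' with
                  | nil =>
                      -- [a₁, b₁] vs [a₂, b₂]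
                      simp only [List.getLast?_cons_cons] at hlast
                      have hb : b₁ = b₂ := by simpa using hlast
                      have ha : a₁ = a₂ := by
                        simp only [List.dropLast_cons₂, List.dropLast_singleton] at hdl
                        simpa using hdl
                      rw [ha, hb]
                  | cons p₂ t₂ => simp at hlen
              | cons p₁ t₁ =>
                cases s₂' with
                | nil => simp at hlen
                | cons p₂ t₂ =>
                  -- a₁::b₁::p₁::t₁ vs a₂::b₂::p₂::t₂
                  have hlen3 : (b₁ :: p₁ :: t₁).length = (b₂ :: p₂ :: t₂).length := by
                    simp only [List.length_cons] at hlen ⊢; omega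
                  have hleN : (b₁ :: p₁ :: t₁).length ≤ N := by
                    simp only [List.length_cons] at hle ⊢; omega
                  have hlast' : (b₁ :: p₁ :: t₁).getLast? = (b₂ :: p₂ :: t₂).getLast? := by
                    rw [getLast?_cons_ne a₁ (by simp), getLast?_cons_ne a₂ (by simp)] at hlast
                    exact hlast
                  have hdl' : (b₁ :: p₁ :: t₁).dropLast.getLast?
                      = (b₂ :: p₂ :: t₂).dropLast.getLast? := by
                    rw [dropLast_getLast?_cons a₁ (by simp), dropLast_getLast?_cons a₂ (by simp)]
                      at hdl
                    exact hdl
                  have hd₁ : devr (a₁ :: b₁ :: p₁ :: t₁)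
                      = if a₁ = p₁ then devr (b₁ :: p₁ :: t₁)
                        else (t₁.length + 2, a₁) :: devr (b₁ :: p₁ :: t₁) := rfl
                  have hd₂ : devr (a₂ :: b₂ :: p₂ :: t₂)
                      = if a₂ = p₂ then devr (b₂ :: p₂ :: t₂)
                        else (t₂.length + 2, a₂) :: devr (b₂ :: p₂ :: t₂) := rfl
                  have htlen : t₁.length = t₂.length := by
                    simp only [List.length_cons] at hlen; omega
                  by_cases h₁ : a₁ = p₁ <;> by_cases h₂ : a₂ = p₂
                  · rw [hd₁, if_pos h₁, hd₂, if_pos h₂] at hdev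
                    have heq := ihN _ _ hleN hlen3 hlast' hdl' hdev
                    injection heq with hb heq'
                    injection heq' with hp ht
                    subst hb; subst hp; subst ht
                    rw [h₁, h₂]
                  · rw [hd₁, if_pos h₁, hd₂, if_neg h₂] at hdev
                    exfalso
                    have hm : ((t₂.length + 2, a₂) : ℕ × Fin n) ∈ devr (b₁ :: p₁ :: t₁) := by
                      rw [hdev]; exact List.mem_cons_self
                    have := devr_pos_lt _ _ hm
                    simp only [List.length_cons] at this
                    omega
                  · rw [hd₁, if_neg h₁, hd₂, if_pos h₂] at hdev
                    exfalso
                    have hm : ((t₁.length + 2, a₁) : ℕ × Fin n) ∈ devr (b₂ :: p₂ :: t₂) := by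
                      rw [← hdev]; exact List.mem_cons_self
                    have := devr_pos_lt _ _ hm
                    simp only [List.length_cons] at this
                    omega
                  · rw [hd₁, if_neg h₁, hd₂, if_neg h₂] at hdev
                    injection hdev with he hdev'
                    have ha : a₁ = a₂ := by
                      have := congrArg Prod.snd he; simpa using this
                    have heq := ihN _ _ hleN hlen3 hlast' hdl' hdev'
                    rw [ha, heq]
/-! ### The core word of an alternating geodesic, and the main bounds -/

/-- Decide membership in a pair. -/
def inPair {n : ℕ} (p : Sym2 (Fin n)) (c : Fin n) : Bool := decide (c ∈ p)

/-- The canonical core word of an alternating geodesic. -/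
def uCore {n : ℕ} (γ : AltGeo n) : List (Fin n) :=
  ((rho (Quotient.out γ.coset)).1.reverse.dropWhile (inPair γ.pair)).reverse

lemma inPair_eq_pb {n : ℕ} (i j : Fin n) : inPair s(i, j) = pb i j := by
  funext c
  simp only [inPair, pb]
  exact decide_eq_decide.mpr Sym2.mem_iff

lemma uCore_eq_coreAux {n : ℕ} (i j : Fin n) (nd : ¬ (s(i, j) : Sym2 (Fin n)).IsDiag)
    (c : Gam n ⧸ pairSub s(i, j)) :
    uCore ⟨s(i, j), nd, c⟩ = coreAux i j (rho (Quotient.out c)).1 := by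
  unfold uCore coreAux
  show (List.dropWhile (inPair s(i, j)) ((rho (Quotient.out c)).1.reverse)).reverse = _
  rw [inPair_eq_pb]

lemma uCore_mk_coset {n : ℕ} (γ : AltGeo n) :
    QuotientGroup.mk (wprod (uCore γ)) = γ.coset := by
  obtain ⟨p, nd, c⟩ := γ
  revert nd c
  induction p using Sym2.ind with
  | _ i j =>
    intro nd c
    show QuotientGroup.mk (wprod (uCore ⟨s(i, j), nd, c⟩)) = c
    rw [uCore_eq_coreAux i j nd c]
    have h1 : (wprod (coreAux i j (rho (Quotient.out c)).1))⁻¹ * Quotient.out c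
        ∈ pairSub s(i, j) := by
      have := coreAux_coset i j (rho (Quotient.out c)).1
      rwa [wprod_rho] at this
    calc (QuotientGroup.mk (wprod (coreAux i j (rho (Quotient.out c)).1))
            : Gam n ⧸ pairSub s(i, j))
        = QuotientGroup.mk (Quotient.out c) := QuotientGroup.eq.mpr h1
      _ = c := QuotientGroup.out_eq' c

lemma uCore_chain' {n : ℕ} (γ : AltGeo n) : (uCore γ).IsChain (· ≠ ·) := by
  apply chain'_ne_reverse
  apply chain'_dropWhile
  apply chain'_ne_reverse
  exact (rho (Quotient.out γ.coset)).2

lemma geo_inj {n : ℕ} {γ₁ γ₂ : AltGeo n} (hp : γ₁.pair = γ₂.pair)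
    (hu : uCore γ₁ = uCore γ₂) : γ₁ = γ₂ := by
  obtain ⟨p₁, nd₁, c₁⟩ := γ₁
  obtain ⟨p₂, nd₂, c₂⟩ := γ₂
  dsimp at hp
  subst hp
  have h1 := uCore_mk_coset ⟨p₁, nd₁, c₁⟩
  have h2 := uCore_mk_coset ⟨p₁, nd₂, c₂⟩
  dsimp at h1 h2 hu
  rw [hu] at h1
  have hc : c₁ = c₂ := h1.symm.trans h2
  subst hc
  rfl

lemma two_pow_le_fib (j : ℕ) : 2 ^ j ≤ Nat.fib (2 * j + 2) := by
  induction j with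
  | zero => simp
  | succ j ih =>
      have h1 : Nat.fib (2 * j + 2) ≤ Nat.fib (2 * j + 3) := Nat.fib_le_fib_succ
      have h2 : Nat.fib (2 * (j + 1) + 2) = Nat.fib (2 * j + 2) + Nat.fib (2 * j + 3) := by
        rw [show 2 * (j + 1) + 2 = (2 * j + 2) + 2 by omega, Nat.fib_add_two,
          show 2 * j + 2 + 1 = 2 * j + 3 by omega]
      have h3 : 2 ^ (j + 1) = 2 ^ j + 2 ^ j := by rw [pow_succ]; omega
      omega

lemma dev_le_of_fib_le {d m : ℕ} (h : Nat.fib (d + 2) ≤ m) : d ≤ 2 * Nat.log 2 m + 1 := by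
  have hm : m ≠ 0 := by
    have h1 : 0 < Nat.fib (d + 2) := Nat.fib_pos.mpr (by omega)
    omega
  have key : 2 ^ (d / 2) ≤ m := by
    calc 2 ^ (d / 2) ≤ Nat.fib (2 * (d / 2) + 2) := two_pow_le_fib _
      _ ≤ Nat.fib (d + 2) := Nat.fib_mono (by omega)
      _ ≤ m := h
  have := (Nat.le_log_iff_pow_le one_lt_two hm).mpr key
  omega

/-- The main structural bounds on a Fibonacci function. -/
lemma F_bound {n : ℕ} (F : AltGeo n → ℕ) (hF : IsFib n F) (γ : AltGeo n) :
    1 ≤ F γ ∧ (uCore γ).length < F γ ∧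
      (∀ m, F γ ≤ m → (devr (uCore γ).reverse).length ≤ 2 * Nat.log 2 m + 1) := by
  obtain ⟨p, nd, c⟩ := γ
  revert nd c
  induction p using Sym2.ind with
  | _ i j =>
    intro nd c
    have hij : i ≠ j := fun h => nd (Sym2.mk_isDiag_iff.mpr h)
    set g := Quotient.out c with hg
    set u := uCore ⟨s(i, j), nd, c⟩ with huu
    have hue : u = coreAux i j (rho g).1 := uCore_eq_coreAux i j nd c
    have hu : Core i j u := by rw [hue]; exact coreAux_core i j (rho g).2
    have hc : QuotientGroup.mk (wprod u) = c := uCore_mk_coset ⟨s(i, j), nd, c⟩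
    have hFeq : F ⟨s(i, j), nd, c⟩ = Fc F i j u := by
      rw [Fc_def F hij]
      congr 1
      unfold mkGeo
      rw [hc]
    rw [hFeq]
    cases hul : u.getLast? with
    | none =>
        have hnil : u = [] := List.getLast?_eq_none_iff.mp hul
        have h1 : Fc F i j u = 1 := by
          apply Fc_root F hF hij
          rw [hnil, wprod_nil]
          exact one_mem _
        rw [h1]
        refine ⟨le_refl 1, by rw [hnil]; simp, ?_⟩
        intro m _
        rw [hnil]
        show (devr ([] : List (Fin n)).reverse).length ≤ _
        simp [devr]
    | some k =>
        have hki : k ≠ i := (hu.2 k hul).1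
        have hkj : k ≠ j := (hu.2 k hul).2
        have hdec : u.dropLast ++ [k] = u := List.dropLast_append_getLast? k hul
        have hrev : u.reverse = k :: u.dropLast.reverse := by
          conv_lhs => rw [← hdec]
          simp
        have hchr : u.reverse.IsChain (· ≠ ·) := chain'_ne_reverse hu.1
        have hrec : Fc F i j u = Fc F i k u + Fc F j k u := Fc_rec F hF hij hu hul
        have hbr1 : Fc F i k u = Gr u.reverse i := by
          have := Fc_eq_Gr F hF u.reverse hchr k u.dropLast.reverse hrev i (Ne.symm hki)
          rwa [List.reverse_reverse] at this
        have hbr2 : Fc F j k u = Gr u.reverse j := by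
          have := Fc_eq_Gr F hF u.reverse hchr k u.dropLast.reverse hrev j (Ne.symm hkj)
          rwa [List.reverse_reverse] at this
        obtain ⟨A, B, C⟩ := Gr_inv u.reverse hchr k u.dropLast.reverse hrev
        have hune : u.reverse ≠ [] := by rw [hrev]; simp
        have hp1 := Gr_pos u.reverse hune i
        have hp2 := Gr_pos u.reverse hune j
        have hlen := C i j (Ne.symm hki) (Ne.symm hkj) hij
        rw [List.length_reverse] at hlen
        refine ⟨by omega, by omega, ?_⟩
        intro m hm
        rw [hrec, hbr1, hbr2] at hm
        have hfib : Nat.fib ((devr u.reverse).length + 2) ≤ m := by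
          rcases B i j (Ne.symm hki) (Ne.symm hkj) hij with h | h <;> omega
        exact dev_le_of_fib_le hfib
/-! ### The master injection and the fiber cardinality bound -/

def DM (m : ℕ) : ℕ := 2 * Nat.log 2 m + 2

abbrev EncT (n m : ℕ) : Type :=
  Sym2 (Fin n) × Option (Fin n) × Option (Fin n) × Fin (m + 1) ×
    (Fin (DM m) → Option (Fin (m + 1) × Fin n))

/-- The encoding of an alternating geodesic. -/
def encG {n : ℕ} (m : ℕ) (γ : AltGeo n) : EncT n m :=
  ( γ.pair, (uCore γ).reverse.getLast?, (uCore γ).reverse.dropLast.getLast?,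
    ⟨(uCore γ).reverse.length % (m + 1), Nat.mod_lt _ m.succ_pos⟩,
    fun t => ((devr (uCore γ).reverse)[t.1]?).map
      (fun e => (⟨e.1 % (m + 1), Nat.mod_lt _ m.succ_pos⟩, e.2)) )

lemma encG_inj {n : ℕ} (F : AltGeo n → ℕ) (hF : IsFib n F) (m : ℕ)
    (γ₁ γ₂ : AltGeo n) (h₁ : F γ₁ ≤ m) (h₂ : F γ₂ ≤ m)
    (he : encG m γ₁ = encG m γ₂) : γ₁ = γ₂ := by
  simp only [encG, Prod.mk.injEq] at he
  obtain ⟨hp, hlast, hdl, hlen, hdev⟩ := he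
  have hb₁ := F_bound F hF γ₁
  have hb₂ := F_bound F hF γ₂
  have hlen₁ : (uCore γ₁).reverse.length < m + 1 := by
    rw [List.length_reverse]; omega
  have hlen₂ : (uCore γ₂).reverse.length < m + 1 := by
    rw [List.length_reverse]; omega
  have hlen' : (uCore γ₁).reverse.length = (uCore γ₂).reverse.length := by
    have hv := congrArg Fin.val hlen
    dsimp at hv
    rw [Nat.mod_eq_of_lt hlen₁, Nat.mod_eq_of_lt hlen₂] at hv
    exact hv
  have hdev₁ : (devr (uCore γ₁).reverse).length ≤ DM m := by
    have := hb₁.2.2 m h₁; rw [DM]; omega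
  have hdev₂ : (devr (uCore γ₂).reverse).length ≤ DM m := by
    have := hb₂.2.2 m h₂; rw [DM]; omega
  have hentry : ∀ (γ : AltGeo n), F γ ≤ m → ∀ e ∈ devr (uCore γ).reverse, e.1 < m + 1 := by
    intro γ hγ e hel
    have h1 := devr_pos_lt _ _ hel
    have h2 := (F_bound F hF γ).2.1
    rw [List.length_reverse] at h1
    omega
  have hdev' : devr (uCore γ₁).reverse = devr (uCore γ₂).reverse := by
    apply List.ext_getElem?
    intro t
    by_cases ht : t < DM m
    · have hft := congrFun hdev ⟨t, ht⟩
      dsimp at hft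
      cases hg₁ : (devr (uCore γ₁).reverse)[t]? with
      | none =>
          cases hg₂ : (devr (uCore γ₂).reverse)[t]? with
          | none => rfl
          | some e₂ => rw [hg₁, hg₂] at hft; simp at hft
      | some e₁ =>
          cases hg₂ : (devr (uCore γ₂).reverse)[t]? with
          | none => rw [hg₁, hg₂] at hft; simp at hft
          | some e₂ =>
              rw [hg₁, hg₂] at hft
              simp only [Option.map_some, Option.some.injEq, Prod.mk.injEq] at hft
              obtain ⟨hfe, hse⟩ := hft
              have he₁ := hentry γ₁ h₁ e₁ (List.mem_of_getElem? hg₁)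
              have he₂ := hentry γ₂ h₂ e₂ (List.mem_of_getElem? hg₂)
              have hvv := congrArg Fin.val hfe
              simp only [Nat.mod_eq_of_lt he₁, Nat.mod_eq_of_lt he₂] at hvv
              exact congrArg some (Prod.ext hvv hse)
    · have hge : DM m ≤ t := not_lt.mp ht
      rw [List.getElem?_eq_none (le_trans hdev₁ hge),
        List.getElem?_eq_none (le_trans hdev₂ hge)]
  have hrev : (uCore γ₁).reverse = (uCore γ₂).reverse :=
    encode_inj (uCore γ₁).reverse.length _ _ (le_refl _) hlen' hlast hdl hdev'
  exact geo_inj hp (List.reverse_injective hrev)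

lemma fiber_finite {n : ℕ} (F : AltGeo n → ℕ) (hF : IsFib n F) (m : ℕ) :
    {γ : AltGeo n | F γ ≤ m}.Finite := by
  have hinj : Function.Injective (fun γs : {γ : AltGeo n // F γ ≤ m} => encG m γs.1) := by
    rintro ⟨γ₁, h₁⟩ ⟨γ₂, h₂⟩ h
    exact Subtype.ext (encG_inj F hF m γ₁ γ₂ h₁ h₂ h)
  have hfin : Finite {γ : AltGeo n // F γ ≤ m} := Finite.of_injective _ hinj
  exact Set.finite_coe_iff.mp hfin

lemma fiber_card {n : ℕ} (F : AltGeo n → ℕ) (hF : IsFib n F) (m : ℕ) :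
    Nat.card {γ : AltGeo n // F γ ≤ m} ≤ Fintype.card (EncT n m) := by
  have hinj : Function.Injective (fun γs : {γ : AltGeo n // F γ ≤ m} => encG m γs.1) := by
    rintro ⟨γ₁, h₁⟩ ⟨γ₂, h₂⟩ h
    exact Subtype.ext (encG_inj F hF m γ₁ γ₂ h₁ h₂ h)
  calc Nat.card {γ : AltGeo n // F γ ≤ m} ≤ Nat.card (EncT n m) :=
        Nat.card_le_card_of_injective _ hinj
    _ = Fintype.card (EncT n m) := Nat.card_eq_fintype_card

lemma card_EncT (n m : ℕ) : Fintype.card (EncT n m)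
    = Fintype.card (Sym2 (Fin n)) * ((n + 1) * ((n + 1) * ((m + 1)
        * (((m + 1) * n + 1) ^ DM m)))) := by
  simp [Fintype.card_option, Fintype.card_fun]
/-! ### Summability of the majorant series -/

lemma isLittleO_logsq : (fun z : ℝ => Real.log z ^ 2) =o[Filter.atTop] (fun z : ℝ => z) := by
  have h1 : Real.log =o[Filter.atTop] fun z : ℝ => z ^ (1/2 : ℝ) :=
    isLittleO_log_rpow_atTop (by norm_num)
  have h2 := h1.pow (n := 2) (by norm_num)
  have h3 : (fun z : ℝ => (z ^ (1/2 : ℝ)) ^ (2 : ℕ)) =ᶠ[Filter.atTop] (fun z : ℝ => z) := by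
    filter_upwards [Filter.eventually_ge_atTop (0 : ℝ)] with z hz
    rw [← Real.rpow_natCast (z ^ (1/2 : ℝ)) 2, ← Real.rpow_mul hz]
    norm_num
  exact h2.trans_eventuallyEq h3

lemma hCB_nat (n : ℕ) (m : ℕ) (hm : n ≤ m) :
    Fintype.card (EncT n m)
      ≤ (Fintype.card (Sym2 (Fin n)) * (n + 1) * (n + 1)) * (m + 2) ^ (2 * DM m + 1) := by
  rw [card_EncT]
  have h1 : (m + 1) * n + 1 ≤ (m + 2) ^ 2 := by nlinarith
  have h2 : ((m + 1) * n + 1) ^ DM m ≤ ((m + 2) ^ 2) ^ DM m := Nat.pow_le_pow_left h1 _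
  have h3 : (m + 2) ^ (2 * DM m + 1) = (m + 2) * ((m + 2) ^ 2) ^ DM m := by
    rw [pow_succ', ← pow_mul]
  rw [h3]
  calc Fintype.card (Sym2 (Fin n)) * ((n + 1) * ((n + 1) * ((m + 1) * (((m + 1) * n + 1) ^ DM m))))
      = (Fintype.card (Sym2 (Fin n)) * (n + 1) * (n + 1)) * ((m + 1) * ((m + 1) * n + 1) ^ DM m) := by
        ring
    _ ≤ (Fintype.card (Sym2 (Fin n)) * (n + 1) * (n + 1)) * ((m + 2) * ((m + 2) ^ 2) ^ DM m) := by
        apply Nat.mul_le_mul_left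
        exact Nat.mul_le_mul (by omega) h2

lemma summable_CB (n : ℕ) (hn : 0 < n) {x : ℝ} (hx0 : 0 < x) (hx1 : x < 1) :
    Summable (fun m : ℕ => (Fintype.card (EncT n m) : ℝ) * x ^ m) := by
  have hy0 : 0 < (1 + x) / 2 := by linarith
  have hxy : x < (1 + x) / 2 := by linarith
  have hy1 : (1 + x) / 2 < 1 := by linarith
  set y : ℝ := (1 + x) / 2 with hy
  set t : ℝ := y / x with htdef
  have ht1 : 1 < t := (one_lt_div hx0).mpr hxy
  have hlogt : 0 < Real.log t := Real.log_pos ht1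
  have hScard : 0 < Fintype.card (Sym2 (Fin n)) :=
    Fintype.card_pos_iff.mpr ⟨s(⟨0, hn⟩, ⟨0, hn⟩)⟩
  set Anat : ℕ := Fintype.card (Sym2 (Fin n)) * (n + 1) * (n + 1) with hAnat
  have hA0 : (0 : ℝ) < (Anat : ℝ) := by
    have : 0 < Anat := by positivity
    exact_mod_cast this
  have hlog2 : 0 < Real.log 2 := Real.log_pos one_lt_two
  set c₃ : ℝ := 2 / Real.log 2 with hc₃
  set g : ℝ → ℝ := fun z => (2 * c₃) * (Real.log z) ^ 2 + 5 * Real.log z + Real.log Anat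
    with hgdef
  have hg : g =o[Filter.atTop] (id : ℝ → ℝ) := by
    have ha : (fun z : ℝ => (2 * c₃) * (Real.log z) ^ 2) =o[Filter.atTop] (id : ℝ → ℝ) :=
      isLittleO_logsq.const_mul_left _
    have hb : (fun z : ℝ => 5 * Real.log z) =o[Filter.atTop] (id : ℝ → ℝ) :=
      Real.isLittleO_log_id_atTop.const_mul_left _
    have hc : (fun _ : ℝ => Real.log Anat) =o[Filter.atTop] (id : ℝ → ℝ) := by
      rw [Asymptotics.isLittleO_const_left]
      right
      exact tendsto_norm_atTop_atTop
    exact (ha.add hb).add hc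
  have hcomp : (fun m : ℕ => g ((m : ℝ) + 2)) =o[Filter.atTop] (fun m : ℕ => (m : ℝ)) := by
    have h1 : Filter.Tendsto (fun m : ℕ => ((m : ℝ) + 2)) Filter.atTop Filter.atTop :=
      Filter.tendsto_atTop_add_const_right _ 2 tendsto_natCast_atTop_atTop
    have h2 := hg.comp_tendsto h1
    have h3 : (fun m : ℕ => ((m : ℝ) + 2)) =O[Filter.atTop] (fun m : ℕ => (m : ℝ)) := by
      rw [Asymptotics.isBigO_iff]
      refine ⟨3, ?_⟩
      filter_upwards [Filter.eventually_ge_atTop 1] with m hm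
      have hm1 : (1 : ℝ) ≤ (m : ℝ) := by exact_mod_cast hm
      rw [Real.norm_eq_abs, Real.norm_eq_abs, abs_of_nonneg (by linarith),
        abs_of_nonneg (by linarith)]
      linarith
    exact h2.trans_isBigO h3
  have hsmall := (Asymptotics.isLittleO_iff.mp hcomp) hlogt
  have hev : ∀ᶠ m : ℕ in Filter.atTop,
      (Fintype.card (EncT n m) : ℝ) * x ^ m ≤ y ^ m := by
    filter_upwards [hsmall, Filter.eventually_ge_atTop n, Filter.eventually_ge_atTop 1]
      with m hsm hmn hm1
    have hm2 : (0 : ℝ) < (m : ℝ) + 2 := by positivity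
    have hlogm : 0 ≤ Real.log ((m : ℝ) + 2) := Real.log_nonneg (by
      have : (0:ℝ) ≤ (m : ℝ) := Nat.cast_nonneg m
      linarith)
    -- cast the (naturals) cardinality bound
    have hcast : (Fintype.card (EncT n m) : ℝ)
        ≤ (Anat : ℝ) * ((m : ℝ) + 2) ^ (2 * DM m + 1) := by
      exact_mod_cast hCB_nat n m hmn
    -- bound on DM
    have hDMr : (DM m : ℝ) ≤ c₃ * Real.log ((m : ℝ) + 2) + 2 := by
      have hL : (Nat.log 2 m : ℝ) * Real.log 2 ≤ Real.log ((m : ℝ) + 2) := by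
        have hmm : m ≠ 0 := by omega
        have h2L : (2 : ℕ) ^ Nat.log 2 m ≤ m := Nat.pow_log_le_self 2 hmm
        have h2L' : ((2 : ℝ)) ^ Nat.log 2 m ≤ (m : ℝ) + 2 := by
          have := (Nat.cast_le (α := ℝ)).mpr h2L
          push_cast at this ⊢
          linarith
        have := Real.log_le_log (by positivity) h2L'
        rwa [Real.log_pow] at this
      have hDM' : (DM m : ℝ) = 2 * (Nat.log 2 m : ℝ) + 2 := by
        rw [DM]; push_cast; ring
      rw [hDM', hc₃]
      have h4 : (Nat.log 2 m : ℝ) ≤ Real.log ((m : ℝ) + 2) / Real.log 2 :=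
        (le_div_iff₀ hlog2).mpr hL
      have h5 : 2 / Real.log 2 * Real.log ((m : ℝ) + 2)
          = 2 * (Real.log ((m : ℝ) + 2) / Real.log 2) := by ring
      linarith
    -- the exponential bound
    have hexp : ((m : ℝ) + 2) ^ (2 * DM m + 1)
        = Real.exp (Real.log ((m : ℝ) + 2) * ((2 * DM m + 1 : ℕ) : ℝ)) := by
      rw [← Real.rpow_natCast ((m : ℝ) + 2) (2 * DM m + 1), Real.rpow_def_of_pos hm2]
    have hkey : Real.log (Anat : ℝ) + Real.log ((m : ℝ) + 2) * ((2 * DM m + 1 : ℕ) : ℝ)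
        ≤ g ((m : ℝ) + 2) := by
      rw [hgdef]
      dsimp only
      have hcast2 : ((2 * DM m + 1 : ℕ) : ℝ) = 2 * (DM m : ℝ) + 1 := by push_cast; ring
      rw [hcast2]
      nlinarith [hDMr, hlogm]
    have hgle : g ((m : ℝ) + 2) ≤ Real.log t * (m : ℝ) := by
      have h1 : g ((m : ℝ) + 2) ≤ |g ((m : ℝ) + 2)| := le_abs_self _
      have h2 : |(m : ℝ)| = (m : ℝ) := abs_of_nonneg (Nat.cast_nonneg m)
      rw [Real.norm_eq_abs, Real.norm_eq_abs, h2] at hsm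
      linarith
    calc (Fintype.card (EncT n m) : ℝ) * x ^ m
        ≤ ((Anat : ℝ) * ((m : ℝ) + 2) ^ (2 * DM m + 1)) * x ^ m := by
          apply mul_le_mul_of_nonneg_right hcast (by positivity)
      _ = Real.exp (Real.log (Anat : ℝ)
            + Real.log ((m : ℝ) + 2) * ((2 * DM m + 1 : ℕ) : ℝ)) * x ^ m := by
          rw [Real.exp_add, Real.exp_log hA0, hexp]
      _ ≤ Real.exp (Real.log t * (m : ℝ)) * x ^ m := by
          apply mul_le_mul_of_nonneg_right _ (by positivity)
          exact Real.exp_le_exp.mpr (le_trans hkey hgle)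
      _ = t ^ m * x ^ m := by
          rw [mul_comm (Real.log t), Real.exp_nat_mul, Real.exp_log (by positivity)]
      _ = y ^ m := by
          rw [← mul_pow, htdef, div_mul_cancel₀ _ (ne_of_gt hx0)]
  apply summable_of_isBigO_nat (summable_geometric_of_lt_one hy0.le hy1)
  rw [Asymptotics.isBigO_iff]
  refine ⟨1, ?_⟩
  filter_upwards [hev] with m hm
  rw [Real.norm_eq_abs, Real.norm_eq_abs, one_mul,
    abs_of_nonneg (by positivity), abs_of_nonneg (by positivity)]
  exact hm

/-- Summability of `x ^ F γ` over all alternating geodesics. -/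
lemma summable_pow_F {n : ℕ} (hn : 0 < n) (F : AltGeo n → ℕ) (hF : IsFib n F)
    {x : ℝ} (hx0 : 0 < x) (hx1 : x < 1) :
    Summable (fun γ : AltGeo n => x ^ F γ) := by
  classical
  have hmaj := summable_CB n hn hx0 hx1
  apply summable_of_sum_le (c := ∑' m : ℕ, (Fintype.card (EncT n m) : ℝ) * x ^ m)
  · intro γ
    exact pow_nonneg hx0.le _
  · intro u
    rw [Finset.sum_comp (fun m => x ^ m) F]
    have hterm : ∀ b ∈ u.image F,
        ((u.filter (fun γ => F γ = b)).card : ℝ) * x ^ b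
          ≤ (Fintype.card (EncT n b) : ℝ) * x ^ b := by
      intro b _
      apply mul_le_mul_of_nonneg_right _ (by positivity)
      have hcard : (u.filter (fun γ => F γ = b)).card ≤ Fintype.card (EncT n b) := by
        have hsub : ↑(u.filter (fun γ => F γ = b)) ⊆ {γ : AltGeo n | F γ ≤ b} := by
          intro γ hγ
          simp only [Finset.coe_filter, Set.mem_setOf_eq] at hγ
          exact le_of_eq hγ.2
        calc (u.filter (fun γ => F γ = b)).card
            = (↑(u.filter (fun γ => F γ = b)) : Set (AltGeo n)).ncard :=
              (Set.ncard_coe_finset _).symm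
          _ ≤ ({γ : AltGeo n | F γ ≤ b}).ncard :=
              Set.ncard_le_ncard hsub (fiber_finite F hF b)
          _ = Nat.card {γ : AltGeo n // F γ ≤ b} := (Nat.card_coe_set_eq _).symm
          _ ≤ Fintype.card (EncT n b) := fiber_card F hF b
      exact_mod_cast hcard
    calc ∑ b ∈ u.image F, (u.filter (fun γ => F γ = b)).card • x ^ b
        = ∑ b ∈ u.image F, ((u.filter (fun γ => F γ = b)).card : ℝ) * x ^ b := by
          refine Finset.sum_congr rfl fun b _ => ?_
          rw [nsmul_eq_mul]
      _ ≤ ∑ b ∈ u.image F, (Fintype.card (EncT n b) : ℝ) * x ^ b :=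
          Finset.sum_le_sum hterm
      _ ≤ ∑' m : ℕ, (Fintype.card (EncT n m) : ℝ) * x ^ m :=
          Summable.sum_le_tsum _ (fun b _ => by positivity) hmaj

/-- If `log⁺ ∘ f` has a lower Fibonacci bound on `𝒜`, then `∑_{γ∈𝒜} f(γ)^{−t}` converges
for every `t > 0`. -/
theorem lower_fib_bound_summable (n : ℕ) (hn : 3 ≤ n)
    (F : AltGeo n → ℕ) (hF : IsFib n F)
    (f : AltGeo n → ℝ) (hf : ∀ γ, 0 < f γ)
    (K C : ℝ) (hK : 0 < K) (hC : 0 < C)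
    (hlow : ∀ γ : AltGeo n, K⁻¹ * (F γ : ℝ) - C ≤ logp (f γ)) :
    ∀ t : ℝ, 0 < t → Summable fun γ : AltGeo n => f γ ^ (-t) := by
  intro t ht
  have hn0 : 0 < n := by omega
  set x : ℝ := Real.exp (-(t / K)) with hx
  have hx0 : 0 < x := Real.exp_pos _
  have hx1 : x < 1 := by
    rw [hx, Real.exp_lt_one_iff]
    have : 0 < t / K := div_pos ht hK
    linarith
  have hsum : Summable (fun γ : AltGeo n => x ^ F γ) := summable_pow_F hn0 F hF hx0 hx1
  set M₀ : ℕ := ⌈K * C⌉₊ with hM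
  have hfin : {γ : AltGeo n | F γ ≤ M₀}.Finite := fiber_finite F hF M₀
  rw [← hfin.summable_compl_iff]
  have hg : Summable (fun γs : ↥({γ : AltGeo n | F γ ≤ M₀}ᶜ) =>
      Real.exp (t * C) * x ^ F γs.1) := by
    have h1 := hsum.subtype ({γ : AltGeo n | F γ ≤ M₀}ᶜ)
    exact h1.mul_left _
  refine Summable.of_nonneg_of_le
    (fun γs => Real.rpow_nonneg (hf γs.1).le _) (fun γs => ?_) hg
  show f γs.1 ^ (-t) ≤ Real.exp (t * C) * x ^ F γs.1
  have hγ : ¬ F γs.1 ≤ M₀ := γs.2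
  have hKC : K * C < (F γs.1 : ℝ) := by
    have h1 : K * C ≤ (M₀ : ℝ) := Nat.le_ceil _
    have h2 : M₀ < F γs.1 := by omega
    have h3 : (M₀ : ℝ) < (F γs.1 : ℝ) := by exact_mod_cast h2
    linarith
  have hpos : 0 < K⁻¹ * (F γs.1 : ℝ) - C := by
    have hK' : 0 < K⁻¹ := inv_pos.mpr hK
    have h1 : K⁻¹ * (K * C) < K⁻¹ * (F γs.1 : ℝ) :=
      mul_lt_mul_of_pos_left hKC hK'
    rw [← mul_assoc, inv_mul_cancel₀ (ne_of_gt hK), one_mul] at h1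
    linarith
  have hlog : K⁻¹ * (F γs.1 : ℝ) - C ≤ Real.log (f γs.1) := by
    have h1 := hlow γs.1
    rw [logp] at h1
    by_cases hcase : 0 ≤ Real.log (f γs.1)
    · rwa [max_eq_right hcase] at h1
    · exfalso
      rw [max_eq_left (le_of_lt (not_le.mp hcase))] at h1
      linarith
  calc f γs.1 ^ (-t) = Real.exp (Real.log (f γs.1) * (-t)) :=
        Real.rpow_def_of_pos (hf _) _
    _ ≤ Real.exp ((K⁻¹ * (F γs.1 : ℝ) - C) * (-t)) := by
        apply Real.exp_le_exp.mpr
        exact mul_le_mul_of_nonpos_right hlog (by linarith)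
    _ = Real.exp (t * C) * x ^ F γs.1 := by
        rw [hx, ← Real.exp_nat_mul, ← Real.exp_add]
        congr 1
        field_simp
        ring
end MarkoffHurwitz
end
end
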